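/- Let 0 ≤ k ≤ n be integers and R a commutative ring. The cohomology of the Schubert cochain complex over R is isomorphic, as a graded R-module, to ⊕_{S ∈ {n;k}} V_S, where V_S is placed in degree d(S) and V_S := R if In(S) = ∅ = Out(S); V_S := ker(R →2→ R) if In(S) ∪ Out(S) ≠ ∅ and min(In(S) ∪ Out(S)) ∈ Out(S); and V_S := coker(R →2→ R) if In(S) ∪ Out(S) ≠ ∅ and min(In(S) ∪ Out(S)) ∈ In(S). -/

import Mathlib

open scoped BigOperators Classical

/-- `{n;k}`: the set of subsets of `{1,…,n}` of cardinality `k`. -/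
def Sset (n k : ℕ) : Finset (Finset ℕ) := (Finset.Icc 1 n).powersetCard k

/-- `elt S r` is `s_r`, the `r`-th smallest element of `S` (1-indexed); junk value `0` out of range. -/
def elt (S : Finset ℕ) (r : ℕ) : ℕ := (S.sort (· ≤ ·)).getD (r - 1) 0

/-- `s_{r+1}`, with the convention `s_{k+1} = n+1`. -/
def nxt (n : ℕ) (S : Finset ℕ) (r : ℕ) : ℕ := if r = S.card then n + 1 else elt S (r + 1)

/-- `s_{r-1}`, with the convention `s_0 = 0`. -/
def prv (S : Finset ℕ) (r : ℕ) : ℕ := if r = 1 then 0 else elt S (r - 1)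

/-- `d_r(S) = Σ_{r ≤ i ≤ k} (s_i − i)`. -/
def dr (S : Finset ℕ) (r : ℕ) : ℕ := ∑ i ∈ Finset.Icc r S.card, (elt S i - i)

/-- `d(S) = d_1(S)`. -/
def dS (S : Finset ℕ) : ℕ := dr S 1

/-- `S_r`: the set obtained from `S` by replacing `s_r` with `s_r + 1`. -/
def Sr (S : Finset ℕ) (r : ℕ) : Finset ℕ := insert (elt S r + 1) (S.erase (elt S r))

/-- `In(S) = {i ∈ {1,…,k} : s_i ≡ k (mod 2) and s_{i−1} < s_i − 1}` (convention `s_0 = 0`). -/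
def InS (k : ℕ) (S : Finset ℕ) : Finset ℕ :=
  (Finset.Icc 1 k).filter fun i => elt S i % 2 = k % 2 ∧ prv S i + 1 < elt S i

/-- `Out(S) = {i ∈ {1,…,k} : s_i ≢ k (mod 2) and s_i + 1 < s_{i+1}}` (convention `s_{k+1} = n+1`). -/
def OutS (n k : ℕ) (S : Finset ℕ) : Finset ℕ :=
  (Finset.Icc 1 k).filter fun i => ¬ (elt S i % 2 = k % 2) ∧ elt S i + 1 < nxt n S i

/-- The coefficient of `T` in the Schubert differential `δ(S)`. -/
noncomputable def schubCoeff (n k : ℕ) (R : Type*) [CommRing R] (T S : Finset ℕ) : R :=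
  ∑ r ∈ Finset.Icc 1 k,
    if 1 < nxt n S r - elt S r ∧ Odd ((k : ℤ) - elt S r) ∧ T = Sr S r
    then (-1 : R) ^ dr S r * 2 else 0


/-- The degree-`m` graded piece of `{n;k}`. -/
def Dfin (n k m : ℕ) : Finset (Finset ℕ) := (Sset n k).filter fun S => dS S = m

/-- The degree-`m` term of the Schubert cochain complex over `R`:
the free `R`-module on `{S ∈ {n;k} : d(S) = m}`. -/
abbrev Cgr (n k : ℕ) (R : Type*) [CommRing R] (m : ℕ) := ↥(Dfin n k m) → R

/-- The Schubert differential in degree `m`. -/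
noncomputable def schubDeltaGr (n k : ℕ) (R : Type*) [CommRing R] (m : ℕ) :
    Cgr n k R m →ₗ[R] Cgr n k R (m + 1) :=
  Matrix.mulVecLin fun T S => schubCoeff n k R T.1 S.1

/-- The submodule of coboundaries in degree `m`. -/
noncomputable def Bsub (n k : ℕ) (R : Type*) [CommRing R] :
    (m : ℕ) → Submodule R (Cgr n k R m)
  | 0 => ⊥
  | (m + 1) => LinearMap.range (schubDeltaGr n k R m)

/-- The degree-`m` cohomology of the Schubert cochain complex over `R`. -/
noncomputable abbrev Hgr (n k : ℕ) (R : Type*) [CommRing R] (m : ℕ) :=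
  ↥(LinearMap.ker (schubDeltaGr n k R m)) ⧸
    Submodule.comap (LinearMap.ker (schubDeltaGr n k R m)).subtype (Bsub n k R m)

/-- Multiplication by `2` as an `R`-linear endomorphism of `R`. -/
noncomputable def two (R : Type*) [CommRing R] : R →ₗ[R] R := LinearMap.lsmul R R 2

/-- The degree-`m` sets with `In(S) = ∅ = Out(S)`. -/
noncomputable def freeIdxGr (n k m : ℕ) : Finset (Finset ℕ) :=
  (Dfin n k m).filter fun S => InS k S = ∅ ∧ OutS n k S = ∅

/-- The degree-`m` sets with `In(S) ∪ Out(S) ≠ ∅` and `min (In(S) ∪ Out(S)) ∈ Out(S)`. -/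
noncomputable def minOutIdxGr (n k m : ℕ) : Finset (Finset ℕ) :=
  (Dfin n k m).filter fun S => ∃ i ∈ OutS n k S, ∀ j ∈ InS k S ∪ OutS n k S, i ≤ j

/-- The degree-`m` sets with `In(S) ∪ Out(S) ≠ ∅` and `min (In(S) ∪ Out(S)) ∈ In(S)`. -/
noncomputable def minInIdxGr (n k m : ℕ) : Finset (Finset ℕ) :=
  (Dfin n k m).filter fun S => ∃ i ∈ InS k S, ∀ j ∈ InS k S ∪ OutS n k S, i ≤ j

section EltAPI

local instance : IsAntisymm ℕ (· < ·) := ⟨fun _ _ h h' => absurd h' (lt_asymm h)⟩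

lemma sort_length (S : Finset ℕ) : (S.sort (· ≤ ·)).length = S.card := Finset.length_sort _

lemma elt_eq_get (S : Finset ℕ) (i : ℕ) (h1 : 1 ≤ i) (h2 : i ≤ S.card) :
    elt S i = (S.sort (· ≤ ·)).get ⟨i - 1, by rw [sort_length]; omega⟩ := by
  have h : i - 1 < (S.sort (· ≤ ·)).length := by rw [sort_length]; omega
  simp [elt, List.getD_eq_getElem?_getD, List.getElem?_eq_getElem h]

lemma elt_mem (S : Finset ℕ) (i : ℕ) (h1 : 1 ≤ i) (h2 : i ≤ S.card) : elt S i ∈ S := by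
  rw [elt_eq_get S i h1 h2, ← Finset.mem_sort (· ≤ ·)]
  apply List.get_mem

lemma elt_lt_elt (S : Finset ℕ) {i j : ℕ} (h1 : 1 ≤ i) (h2 : i < j) (h3 : j ≤ S.card) :
    elt S i < elt S j := by
  rw [elt_eq_get S i h1 (by omega), elt_eq_get S j (by omega) h3]
  have := (Finset.sortedLT_sort S).pairwise
  rw [List.pairwise_iff_get] at this
  exact this _ _ (by simp only [Fin.mk_lt_mk]; omega)

lemma mem_iff_elt (S : Finset ℕ) (x : ℕ) :
    x ∈ S ↔ ∃ i, 1 ≤ i ∧ i ≤ S.card ∧ elt S i = x := by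
  constructor
  · intro hx
    rw [← Finset.mem_sort (· ≤ ·), List.mem_iff_get] at hx
    obtain ⟨⟨i, hi⟩, hg⟩ := hx
    refine ⟨i + 1, by omega, by rw [← sort_length]; omega, ?_⟩
    rw [elt_eq_get S (i+1) (by omega) (by rw [← sort_length]; omega)]
    simpa using hg
  · rintro ⟨i, h1, h2, rfl⟩; exact elt_mem S i h1 h2

lemma sort_eq_map (S : Finset ℕ) (k : ℕ) (hcard : S.card = k) (t : ℕ → ℕ)
    (hmono : ∀ i j, 1 ≤ i → i < j → j ≤ k → t i < t j)
    (hmem : ∀ i, 1 ≤ i → i ≤ k → t i ∈ S) :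
    S.sort (· ≤ ·) = (List.range' 1 k).map t := by
  have hlen : ((List.range' 1 k).map t).length = k := by simp
  have hsorted : ((List.range' 1 k).map t).Pairwise (· < ·) := by
    rw [List.pairwise_iff_get]
    intro a b hab
    simp only [List.get_eq_getElem, List.getElem_map, List.getElem_range']
    have ha : (a : ℕ) < k := by have := a.2; simpa using this
    have hb : (b : ℕ) < k := by have := b.2; simpa using this
    exact hmono _ _ (by omega) (by omega) (by omega)
  have hnodup : ((List.range' 1 k).map t).Nodup := hsorted.nodup
  have hinj : Set.InjOn t (Finset.Icc 1 k) := by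
    intro a ha b hb hab
    simp only [Finset.coe_Icc, Set.mem_Icc] at ha hb
    by_contra hne
    rcases Nat.lt_or_ge a b with h | h
    · exact absurd hab (Nat.ne_of_lt (hmono a b ha.1 h hb.2))
    · have : b < a := by omega
      exact absurd hab.symm (Nat.ne_of_lt (hmono b a hb.1 this ha.2))
  have himage : (Finset.Icc 1 k).image t = S := by
    apply Finset.eq_of_subset_of_card_le
    · intro x hx
      rw [Finset.mem_image] at hx
      obtain ⟨i, hi, rfl⟩ := hx
      rw [Finset.mem_Icc] at hi
      exact hmem i hi.1 hi.2
    · rw [Finset.card_image_of_injOn hinj, hcard, Nat.card_Icc]; omega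
  have hperm : List.Perm (S.sort (· ≤ ·)) ((List.range' 1 k).map t) := by
    apply List.perm_of_nodup_nodup_toFinset_eq (Finset.sort_nodup _ _) hnodup
    rw [Finset.sort_toFinset, ← himage]
    ext x
    simp only [Finset.mem_image, List.mem_toFinset, List.mem_map, List.mem_range'_1,
      Finset.mem_Icc]
    constructor
    · rintro ⟨i, hi, rfl⟩; exact ⟨i, by omega, rfl⟩
    · rintro ⟨i, hi, rfl⟩; exact ⟨i, by omega, rfl⟩
  exact List.Perm.eq_of_pairwise (fun a b _ _ h1 h2 => absurd h2 (lt_asymm h1))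
    (Finset.sortedLT_sort S).pairwise hsorted hperm

lemma elt_eq_of (S : Finset ℕ) (k : ℕ) (hcard : S.card = k) (t : ℕ → ℕ)
    (hmono : ∀ i j, 1 ≤ i → i < j → j ≤ k → t i < t j)
    (hmem : ∀ i, 1 ≤ i → i ≤ k → t i ∈ S) :
    ∀ i, 1 ≤ i → i ≤ k → elt S i = t i := by
  intro i h1 h2
  have hs := sort_eq_map S k hcard t hmono hmem
  have hlt : i - 1 < ((List.range' 1 k).map t).length := by simp; omega
  rw [elt, hs, List.getD_eq_getElem?_getD, List.getElem?_eq_getElem hlt]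
  simp only [List.getElem_map, List.getElem_range', Option.getD_some]
  congr 1
  omega

lemma eq_of_elt_eq {S T : Finset ℕ} {k : ℕ} (hS : S.card = k) (hT : T.card = k)
    (h : ∀ i, 1 ≤ i → i ≤ k → elt S i = elt T i) : S = T := by
  ext x
  rw [mem_iff_elt, mem_iff_elt, hS, hT]
  constructor
  · rintro ⟨i, h1, h2, rfl⟩; exact ⟨i, h1, h2, (h i h1 h2).symm⟩
  · rintro ⟨i, h1, h2, rfl⟩; exact ⟨i, h1, h2, h i h1 h2⟩

end EltAPI
section SsetAPI

variable {n k : ℕ} {S : Finset ℕ}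

lemma mem_Sset_iff : S ∈ Sset n k ↔ S ⊆ Finset.Icc 1 n ∧ S.card = k :=
  Finset.mem_powersetCard

lemma card_eq (hS : S ∈ Sset n k) : S.card = k := (mem_Sset_iff.mp hS).2

lemma elt_mem_Icc (hS : S ∈ Sset n k) {i : ℕ} (h1 : 1 ≤ i) (h2 : i ≤ k) :
    1 ≤ elt S i ∧ elt S i ≤ n := by
  have := (mem_Sset_iff.mp hS).1 (elt_mem S i h1 (by rw [card_eq hS]; omega))
  rwa [Finset.mem_Icc] at this

lemma elt_lt (hS : S ∈ Sset n k) {i j : ℕ} (h1 : 1 ≤ i) (h2 : i < j) (h3 : j ≤ k) :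
    elt S i < elt S j := elt_lt_elt S h1 h2 (by rw [card_eq hS]; omega)

lemma elt_add_le (hS : S ∈ Sset n k) {i : ℕ} (d : ℕ) (h1 : 1 ≤ i) (h2 : i + d ≤ k) :
    elt S i + d ≤ elt S (i + d) := by
  induction d with
  | zero => simp
  | succ m ih =>
    have h3 := ih (by omega)
    have h4 : elt S (i + m) < elt S (i + m + 1) := elt_lt hS (by omega) (by omega) (by omega)
    have h5 : i + (m + 1) = i + m + 1 := by omega
    rw [h5]
    omega

lemma le_elt (hS : S ∈ Sset n k) {i : ℕ} (h1 : 1 ≤ i) (h2 : i ≤ k) : i ≤ elt S i := by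
  have := elt_add_le hS (i - 1) (i := 1) (by omega) (by omega)
  have h3 : 1 + (i - 1) = i := by omega
  rw [h3] at this
  have := (elt_mem_Icc hS (i := 1) (by omega) (by omega)).1
  omega

lemma elt_lt_nxt (hS : S ∈ Sset n k) {r : ℕ} (h1 : 1 ≤ r) (h2 : r ≤ k) :
    elt S r < nxt n S r := by
  rw [nxt, card_eq hS]
  by_cases h : r = k
  · subst h
    rw [if_pos rfl]
    have := (elt_mem_Icc hS h1 h2).2
    omega
  · rw [if_neg h]
    exact elt_lt hS h1 (by omega) (by omega)

lemma nxt_le (hS : S ∈ Sset n k) {r : ℕ} (h2 : r ≤ k) : nxt n S r ≤ n + 1 := by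
  rw [nxt, card_eq hS]
  by_cases h : r = k
  · simp [h]
  · rw [if_neg h]
    have := (elt_mem_Icc hS (i := r + 1) (by omega) (by omega)).2
    omega

lemma prv_lt_elt (hS : S ∈ Sset n k) {r : ℕ} (h1 : 1 ≤ r) (h2 : r ≤ k) :
    prv S r < elt S r := by
  rw [prv]
  by_cases h : r = 1
  · rw [if_pos h]
    have := (elt_mem_Icc hS h1 h2).1
    omega
  · rw [if_neg h]
    exact elt_lt hS (by omega) (by omega) h2

lemma nxt_eq (hS : S ∈ Sset n k) {r : ℕ} (h : r < k) : nxt n S r = elt S (r + 1) := by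
  rw [nxt, card_eq hS, if_neg (by omega)]

lemma nxt_eq_last (hS : S ∈ Sset n k) : nxt n S k = n + 1 := by
  rw [nxt, card_eq hS, if_pos rfl]

lemma dr_eq (hS : S ∈ Sset n k) (r : ℕ) : dr S r = ∑ i ∈ Finset.Icc r k, (elt S i - i) := by
  rw [dr, card_eq hS]

end SsetAPI
section SrAPI

variable {n k : ℕ} {S : Finset ℕ} {r : ℕ}

lemma mem_Out_iff : r ∈ OutS n k S ↔
    (1 ≤ r ∧ r ≤ k) ∧ ¬(elt S r % 2 = k % 2) ∧ elt S r + 1 < nxt n S r := by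
  simp [OutS, Finset.mem_filter, Finset.mem_Icc, and_assoc]

lemma mem_In_iff : r ∈ InS k S ↔
    (1 ≤ r ∧ r ≤ k) ∧ elt S r % 2 = k % 2 ∧ prv S r + 1 < elt S r := by
  simp [InS, Finset.mem_filter, Finset.mem_Icc, and_assoc]

lemma succ_not_mem (hS : S ∈ Sset n k) (hr1 : 1 ≤ r) (hrk : r ≤ k)
    (hgap : elt S r + 1 < nxt n S r) : elt S r + 1 ∉ S := by
  intro hmem
  rw [mem_iff_elt, card_eq hS] at hmem
  obtain ⟨j, hj1, hjk, hj⟩ := hmem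
  rcases Nat.lt_or_ge r j with h | h
  · have hrk' : r < k := by omega
    rw [nxt_eq hS hrk'] at hgap
    have : elt S (r + 1) ≤ elt S j := by
      rcases Nat.lt_or_ge (r + 1) j with h' | h'
      · exact le_of_lt (elt_lt hS (by omega) h' hjk)
      · have : r + 1 = j := by omega
        rw [this]
    omega
  · have : elt S j ≤ elt S r := by
      rcases Nat.lt_or_ge j r with h' | h'
      · exact le_of_lt (elt_lt hS hj1 h' hrk)
      · have : j = r := by omega
        rw [this]
    omega

lemma card_Sr (hS : S ∈ Sset n k) (hr1 : 1 ≤ r) (hrk : r ≤ k)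
    (hgap : elt S r + 1 < nxt n S r) : (Sr S r).card = k := by
  have hmem : elt S r ∈ S := elt_mem S r hr1 (by rw [card_eq hS]; omega)
  have hnot : elt S r + 1 ∉ S.erase (elt S r) :=
    fun h => succ_not_mem hS hr1 hrk hgap (Finset.mem_of_mem_erase h)
  rw [Sr, Finset.card_insert_of_notMem hnot, Finset.card_erase_of_mem hmem, card_eq hS]
  omega

lemma Sr_mem_Sset (hS : S ∈ Sset n k) (hr1 : 1 ≤ r) (hrk : r ≤ k)
    (hgap : elt S r + 1 < nxt n S r) : Sr S r ∈ Sset n k := by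
  rw [mem_Sset_iff]
  refine ⟨?_, card_Sr hS hr1 hrk hgap⟩
  intro x hx
  rw [Sr, Finset.mem_insert] at hx
  rcases hx with h | h
  · subst h
    rw [Finset.mem_Icc]
    have h2 := nxt_le hS hrk
    omega
  · exact (mem_Sset_iff.mp hS).1 (Finset.mem_of_mem_erase h)

lemma elt_Sr (hS : S ∈ Sset n k) (hr1 : 1 ≤ r) (hrk : r ≤ k)
    (hgap : elt S r + 1 < nxt n S r) :
    ∀ i, 1 ≤ i → i ≤ k → elt (Sr S r) i = if i = r then elt S r + 1 else elt S i := by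
  apply elt_eq_of (Sr S r) k (card_Sr hS hr1 hrk hgap)
  · -- strict mono
    intro i j h1 h2 h3
    by_cases hir : i = r <;> by_cases hjr : j = r
    · omega
    · rw [if_pos hir, if_neg hjr]
      have hrk' : r < k := by omega
      rw [nxt_eq hS hrk'] at hgap
      have : elt S (r + 1) ≤ elt S j := by
        rcases Nat.lt_or_ge (r + 1) j with h' | h'
        · exact le_of_lt (elt_lt hS (by omega) h' h3)
        · have : r + 1 = j := by omega
          rw [this]
      omega
    · subst hjr
      rw [if_neg hir, if_pos rfl]
      have := elt_lt hS h1 h2 h3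
      omega
    · rw [if_neg hir, if_neg hjr]
      exact elt_lt hS h1 h2 h3
  · -- membership
    intro i h1 h2
    by_cases hir : i = r
    · subst hir
      rw [if_pos rfl, Sr]
      exact Finset.mem_insert_self _ _
    · rw [if_neg hir, Sr]
      apply Finset.mem_insert_of_mem
      apply Finset.mem_erase_of_ne_of_mem
      · intro h
        rcases Nat.lt_or_ge i r with h' | h'
        · exact absurd h (Nat.ne_of_lt (elt_lt hS h1 h' hrk))
        · exact absurd h.symm (Nat.ne_of_lt (elt_lt hS hr1 (by omega) h2))
      · exact elt_mem S i h1 (by rw [card_eq hS]; omega)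

lemma nxt_Sr (hS : S ∈ Sset n k) (hr1 : 1 ≤ r) (hrk : r ≤ k)
    (hgap : elt S r + 1 < nxt n S r) :
    ∀ j, 1 ≤ j → j ≤ k → nxt n (Sr S r) j = if j + 1 = r then elt S r + 1 else nxt n S j := by
  intro j h1 h2
  rw [nxt, card_Sr hS hr1 hrk hgap]
  by_cases hjk : j = k
  · subst hjk
    rw [if_pos rfl, if_neg (by omega), nxt_eq_last hS]
  · rw [if_neg hjk, elt_Sr hS hr1 hrk hgap (j+1) (by omega) (by omega), nxt_eq hS (by omega)]

lemma prv_Sr (hS : S ∈ Sset n k) (hr1 : 1 ≤ r) (hrk : r ≤ k)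
    (hgap : elt S r + 1 < nxt n S r) :
    ∀ j, 1 ≤ j → j ≤ k → prv (Sr S r) j = if j = r + 1 then elt S r + 1 else prv S j := by
  intro j h1 h2
  rw [prv, prv]
  by_cases hj1 : j = 1
  · rw [if_pos hj1, if_neg (by omega), if_pos hj1]
  · rw [if_neg hj1, if_neg hj1, elt_Sr hS hr1 hrk hgap (j-1) (by omega) (by omega)]
    by_cases h : j = r + 1
    · rw [if_pos (by omega), if_pos h]
    · rw [if_neg (by omega), if_neg h]

lemma dr_Sr (hS : S ∈ Sset n k) (hr1 : 1 ≤ r) (hrk : r ≤ k)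
    (hgap : elt S r + 1 < nxt n S r) :
    ∀ i, 1 ≤ i → dr (Sr S r) i = dr S i + if i ≤ r then 1 else 0 := by
  intro i h1
  have hSr := Sr_mem_Sset hS hr1 hrk hgap
  rw [dr_eq hSr, dr_eq hS]
  by_cases hik : i ≤ k
  · by_cases hir : i ≤ r
    · rw [if_pos hir]
      have hrmem : r ∈ Finset.Icc i k := by rw [Finset.mem_Icc]; omega
      rw [← Finset.sum_erase_add _ _ hrmem, ← Finset.sum_erase_add _ _ hrmem]
      have hsum : ∑ j ∈ (Finset.Icc i k).erase r, (elt (Sr S r) j - j)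
          = ∑ j ∈ (Finset.Icc i k).erase r, (elt S j - j) := by
        apply Finset.sum_congr rfl
        intro j hj
        rw [Finset.mem_erase, Finset.mem_Icc] at hj
        rw [elt_Sr hS hr1 hrk hgap j (by omega) (by omega), if_neg hj.1]
      rw [hsum, elt_Sr hS hr1 hrk hgap r (by omega) (by omega), if_pos rfl]
      have := le_elt hS hr1 hrk
      omega
    · rw [if_neg hir]
      rw [Nat.add_zero]
      apply Finset.sum_congr rfl
      intro j hj
      rw [Finset.mem_Icc] at hj
      rw [elt_Sr hS hr1 hrk hgap j (by omega) (by omega), if_neg (by omega)]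
  · rw [if_neg (by omega), Finset.Icc_eq_empty (by omega)]
    simp

end SrAPI
section InOutAPI

variable {n k : ℕ} {S : Finset ℕ} {r : ℕ}

lemma dS_Sr (hS : S ∈ Sset n k) (hr1 : 1 ≤ r) (hrk : r ≤ k)
    (hgap : elt S r + 1 < nxt n S r) : dS (Sr S r) = dS S + 1 := by
  rw [dS, dS, dr_Sr hS hr1 hrk hgap 1 le_rfl, if_pos hr1]

/-- cond in `schubCoeff` means membership in `OutS`. -/
lemma cond_iff_Out (hS : S ∈ Sset n k) (hr1 : 1 ≤ r) (hrk : r ≤ k) :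
    (1 < nxt n S r - elt S r ∧ Odd ((k : ℤ) - (elt S r : ℤ))) ↔ r ∈ OutS n k S := by
  rw [mem_Out_iff, Int.odd_iff]
  constructor
  · intro ⟨h1, h2⟩
    refine ⟨⟨hr1, hrk⟩, ?_, by omega⟩
    omega
  · intro ⟨_, h2, h3⟩
    refine ⟨by omega, ?_⟩
    omega

lemma mem_Out_gap (h : r ∈ OutS n k S) : elt S r + 1 < nxt n S r := (mem_Out_iff.mp h).2.2

lemma mem_Out_range (h : r ∈ OutS n k S) : 1 ≤ r ∧ r ≤ k := (mem_Out_iff.mp h).1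

lemma mem_Out_parity (h : r ∈ OutS n k S) : ¬ (elt S r % 2 = k % 2) := (mem_Out_iff.mp h).2.1

lemma Out_Sr (hS : S ∈ Sset n k) (hr : r ∈ OutS n k S) :
    OutS n k (Sr S r) = (OutS n k S).erase r := by
  obtain ⟨hr1, hrk⟩ := mem_Out_range hr
  have hgap := mem_Out_gap hr
  have hpar := mem_Out_parity hr
  ext j
  rw [Finset.mem_erase, mem_Out_iff, mem_Out_iff]
  by_cases hrange : 1 ≤ j ∧ j ≤ k
  swap
  · constructor
    · intro ⟨h, _⟩; exact absurd h hrange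
    · intro ⟨_, h, _⟩; exact absurd h hrange
  rw [elt_Sr hS hr1 hrk hgap j hrange.1 hrange.2, nxt_Sr hS hr1 hrk hgap j hrange.1 hrange.2]
  by_cases hjr : j = r
  · rw [if_pos hjr, if_neg (by omega)]
    subst hjr
    constructor
    · intro ⟨_, hp, _⟩; exact absurd (by omega) hp
    · intro ⟨hne, _⟩; exact absurd rfl hne
  · rw [if_neg hjr]
    by_cases hjr1 : j + 1 = r
    · rw [if_pos hjr1]
      have hnx : nxt n S j = elt S r := by
        rw [nxt_eq hS (by omega), hjr1]
      rw [hnx]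
      constructor
      · intro ⟨ha, hp, hg⟩
        refine ⟨hjr, ha, hp, ?_⟩
        -- if elt S j + 1 = elt S r then parity contradiction
        rcases Nat.lt_or_ge (elt S j + 1) (elt S r) with h | h
        · exact h
        · exfalso
          have hlt : elt S j < elt S r := elt_lt hS hrange.1 (by omega) hrk
          have : elt S j + 1 = elt S r := by omega
          omega
      · intro ⟨_, ha, hp, hg⟩
        exact ⟨ha, hp, by omega⟩
    · rw [if_neg hjr1]
      constructor
      · intro h; exact ⟨hjr, h⟩
      · intro ⟨_, h⟩; exact h

lemma In_Sr (hS : S ∈ Sset n k) (hr : r ∈ OutS n k S) :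
    InS k (Sr S r) = insert r (InS k S) := by
  obtain ⟨hr1, hrk⟩ := mem_Out_range hr
  have hgap := mem_Out_gap hr
  have hpar := mem_Out_parity hr
  ext j
  rw [Finset.mem_insert, mem_In_iff, mem_In_iff]
  by_cases hrange : 1 ≤ j ∧ j ≤ k
  swap
  · constructor
    · intro ⟨h, _⟩; exact absurd h hrange
    · intro h
      rcases h with h | ⟨h, _⟩
      · exact absurd (h ▸ ⟨hr1, hrk⟩) hrange
      · exact absurd h hrange
  rw [elt_Sr hS hr1 hrk hgap j hrange.1 hrange.2, prv_Sr hS hr1 hrk hgap j hrange.1 hrange.2]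
  by_cases hjr : j = r
  · rw [if_pos hjr, if_neg (by omega)]
    subst hjr
    have hprv := prv_lt_elt hS hrange.1 hrange.2
    constructor
    · intro _; exact Or.inl rfl
    · intro _
      refine ⟨hrange, by omega, by omega⟩
  · rw [if_neg hjr]
    by_cases hjr1 : j = r + 1
    · rw [if_pos hjr1]
      have hprv : prv S j = elt S r := by
        rw [prv, if_neg (by omega)]
        congr 1
        omega
      have hlt : elt S r < elt S j := elt_lt hS hr1 (by omega) hrange.2
      constructor
      · intro ⟨ha, hp, hg⟩
        exact Or.inr ⟨ha, hp, by omega⟩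
      · intro h
        rcases h with h | ⟨ha, hp, hg⟩
        · exact absurd h hjr
        · rw [hprv] at hg
          refine ⟨ha, hp, ?_⟩
          -- parity: elt S j ≡ k, elt S r ≢ k, so elt S j ≠ elt S r + 2
          omega
    · rw [if_neg hjr1]
      constructor
      · intro h; exact Or.inr h
      · intro h
        rcases h with h | h
        · exact absurd h hjr
        · exact h

lemma In_Out_disjoint : ∀ j, j ∈ InS k S → j ∈ OutS n k S → False := by
  intro j h1 h2
  exact absurd (mem_In_iff.mp h1).2.1 (mem_Out_parity h2)

lemma Sr_ne (hS : S ∈ Sset n k) (hr : r ∈ OutS n k S) {r' : ℕ} (hr' : r' ∈ OutS n k S)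
    (hne : r ≠ r') : Sr S r ≠ Sr S r' := by
  obtain ⟨hr1, hrk⟩ := mem_Out_range hr
  obtain ⟨hr1', hrk'⟩ := mem_Out_range hr'
  intro h
  have h1 : elt (Sr S r) r = elt S r + 1 := by
    rw [elt_Sr hS hr1 hrk (mem_Out_gap hr) r hr1 hrk, if_pos rfl]
  have h2 : elt (Sr S r') r = elt S r := by
    rw [elt_Sr hS hr1' hrk' (mem_Out_gap hr') r hr1 hrk, if_neg (fun hh => hne hh)]
  rw [h] at h1
  omega

end InOutAPI
/-- The inverse move: replace `s_r` by `s_r - 1`. -/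
noncomputable def invSr (S : Finset ℕ) (r : ℕ) : Finset ℕ :=
  insert (elt S r - 1) (S.erase (elt S r))

section InvSrAPI

variable {n k : ℕ} {T : Finset ℕ} {r : ℕ}

lemma mem_In_range (h : r ∈ InS k T) : 1 ≤ r ∧ r ≤ k := (mem_In_iff.mp h).1
lemma mem_In_parity (h : r ∈ InS k T) : elt T r % 2 = k % 2 := (mem_In_iff.mp h).2.1
lemma mem_In_gap (h : r ∈ InS k T) : prv T r + 1 < elt T r := (mem_In_iff.mp h).2.2

lemma two_le_elt_of_In (hT : T ∈ Sset n k) (hr : r ∈ InS k T) : 2 ≤ elt T r := by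
  obtain ⟨h1, h2⟩ := mem_In_range hr
  have hg := mem_In_gap hr
  omega

lemma elt_pred_lt (hT : T ∈ Sset n k) (hr : r ∈ InS k T) {j : ℕ} (hj1 : 1 ≤ j) (hjr : j < r) :
    elt T j < elt T r - 1 := by
  obtain ⟨h1, h2⟩ := mem_In_range hr
  have hg := mem_In_gap hr
  rw [prv, if_neg (by omega)] at hg
  have : elt T j ≤ elt T (r - 1) := by
    rcases Nat.lt_or_ge j (r - 1) with h | h
    · exact le_of_lt (elt_lt hT hj1 h (by omega))
    · have : j = r - 1 := by omega
      rw [this]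
  omega

lemma pred_not_mem (hT : T ∈ Sset n k) (hr : r ∈ InS k T) : elt T r - 1 ∉ T := by
  obtain ⟨h1, h2⟩ := mem_In_range hr
  have h2le := two_le_elt_of_In hT hr
  intro hmem
  rw [mem_iff_elt, card_eq hT] at hmem
  obtain ⟨j, hj1, hjk, hj⟩ := hmem
  rcases Nat.lt_trichotomy j r with h | h | h
  · have := elt_pred_lt hT hr hj1 h
    omega
  · rw [h] at hj
    omega
  · have := elt_lt hT h1 h hjk
    omega

lemma card_invSr (hT : T ∈ Sset n k) (hr : r ∈ InS k T) : (invSr T r).card = k := by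
  obtain ⟨h1, h2⟩ := mem_In_range hr
  have hmem : elt T r ∈ T := elt_mem T r h1 (by rw [card_eq hT]; omega)
  have hnot : elt T r - 1 ∉ T.erase (elt T r) :=
    fun h => pred_not_mem hT hr (Finset.mem_of_mem_erase h)
  rw [invSr, Finset.card_insert_of_notMem hnot, Finset.card_erase_of_mem hmem, card_eq hT]
  omega

lemma invSr_mem_Sset (hT : T ∈ Sset n k) (hr : r ∈ InS k T) : invSr T r ∈ Sset n k := by
  obtain ⟨h1, h2⟩ := mem_In_range hr
  rw [mem_Sset_iff]
  refine ⟨?_, card_invSr hT hr⟩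
  intro x hx
  rw [invSr, Finset.mem_insert] at hx
  rcases hx with h | h
  · subst h
    rw [Finset.mem_Icc]
    have := two_le_elt_of_In hT hr
    have := (elt_mem_Icc hT h1 h2).2
    omega
  · exact (mem_Sset_iff.mp hT).1 (Finset.mem_of_mem_erase h)

lemma elt_invSr (hT : T ∈ Sset n k) (hr : r ∈ InS k T) :
    ∀ i, 1 ≤ i → i ≤ k → elt (invSr T r) i = if i = r then elt T r - 1 else elt T i := by
  obtain ⟨hr1, hrk⟩ := mem_In_range hr
  have h2le := two_le_elt_of_In hT hr
  apply elt_eq_of (invSr T r) k (card_invSr hT hr)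
  · intro i j h1 h2 h3
    by_cases hir : i = r <;> by_cases hjr : j = r
    · omega
    · rw [if_pos hir, if_neg hjr]
      have : elt T r < elt T j := elt_lt hT hr1 (by omega) h3
      omega
    · rw [if_neg hir, if_pos hjr]
      exact elt_pred_lt hT hr h1 (by omega)
    · rw [if_neg hir, if_neg hjr]
      exact elt_lt hT h1 h2 h3
  · intro i h1 h2
    by_cases hir : i = r
    · rw [if_pos hir, invSr]
      exact Finset.mem_insert_self _ _
    · rw [if_neg hir, invSr]
      apply Finset.mem_insert_of_mem
      apply Finset.mem_erase_of_ne_of_mem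
      · intro h
        rcases Nat.lt_or_ge i r with h' | h'
        · exact absurd h (Nat.ne_of_lt (elt_lt hT h1 h' hrk))
        · exact absurd h.symm (Nat.ne_of_lt (elt_lt hT hr1 (by omega) h2))
      · exact elt_mem T i h1 (by rw [card_eq hT]; omega)

lemma r_mem_Out_invSr (hT : T ∈ Sset n k) (hr : r ∈ InS k T) :
    r ∈ OutS n k (invSr T r) := by
  obtain ⟨hr1, hrk⟩ := mem_In_range hr
  have h2le := two_le_elt_of_In hT hr
  have hpar := mem_In_parity hr
  have helt : elt (invSr T r) r = elt T r - 1 := by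
    rw [elt_invSr hT hr r hr1 hrk, if_pos rfl]
  rw [mem_Out_iff, helt]
  refine ⟨⟨hr1, hrk⟩, by omega, ?_⟩
  rw [nxt, card_invSr hT hr]
  by_cases h : r = k
  · rw [if_pos h]
    have := (elt_mem_Icc hT hr1 hrk).2
    omega
  · rw [if_neg h, elt_invSr hT hr (r+1) (by omega) (by omega), if_neg (by omega)]
    have : elt T r < elt T (r + 1) := elt_lt hT hr1 (by omega) (by omega)
    omega

lemma Sr_invSr (hT : T ∈ Sset n k) (hr : r ∈ InS k T) : Sr (invSr T r) r = T := by
  obtain ⟨hr1, hrk⟩ := mem_In_range hr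
  have h2le := two_le_elt_of_In hT hr
  have hW := invSr_mem_Sset hT hr
  have hrO := r_mem_Out_invSr hT hr
  apply eq_of_elt_eq (k := k) (card_Sr hW hr1 hrk (mem_Out_gap hrO)) (card_eq hT)
  intro i h1 h2
  by_cases hir : i = r
  · rw [hir, elt_Sr hW hr1 hrk (mem_Out_gap hrO) r hr1 hrk, if_pos rfl,
      elt_invSr hT hr r hr1 hrk, if_pos rfl]
    omega
  · rw [elt_Sr hW hr1 hrk (mem_Out_gap hrO) i h1 h2, if_neg hir,
      elt_invSr hT hr i h1 h2, if_neg hir]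

lemma invSr_Sr {S : Finset ℕ} (hS : S ∈ Sset n k) (hr : r ∈ OutS n k S) :
    invSr (Sr S r) r = S := by
  obtain ⟨hr1, hrk⟩ := mem_Out_range hr
  have hgap := mem_Out_gap hr
  have hT := Sr_mem_Sset hS hr1 hrk hgap
  have hrI : r ∈ InS k (Sr S r) := by
    rw [In_Sr hS hr]
    exact Finset.mem_insert_self _ _
  apply eq_of_elt_eq (k := k) (card_invSr hT hrI) (card_eq hS)
  intro i h1 h2
  by_cases hir : i = r
  · rw [hir, elt_invSr hT hrI r hr1 hrk, if_pos rfl,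
      elt_Sr hS hr1 hrk hgap r hr1 hrk, if_pos rfl]
    omega
  · rw [elt_invSr hT hrI i h1 h2, if_neg hir,
      elt_Sr hS hr1 hrk hgap i h1 h2, if_neg hir]

lemma Out_invSr (hT : T ∈ Sset n k) (hr : r ∈ InS k T) :
    OutS n k (invSr T r) = insert r (OutS n k T) := by
  have hrO := r_mem_Out_invSr hT hr
  have h := Out_Sr (invSr_mem_Sset hT hr) hrO
  rw [Sr_invSr hT hr] at h
  ext j
  rw [Finset.mem_insert, h, Finset.mem_erase]
  by_cases hjr : j = r
  · subst hjr
    simp [hrO]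
  · simp [hjr]

lemma In_invSr (hT : T ∈ Sset n k) (hr : r ∈ InS k T) :
    InS k (invSr T r) = (InS k T).erase r := by
  have hrO := r_mem_Out_invSr hT hr
  have h := In_Sr (invSr_mem_Sset hT hr) hrO
  rw [Sr_invSr hT hr] at h
  ext j
  rw [Finset.mem_erase, h, Finset.mem_insert]
  by_cases hjr : j = r
  · rw [hjr]
    constructor
    · intro hmem
      exact absurd (In_Out_disjoint (n := n) r hmem hrO) id
    · rintro ⟨hne, _⟩
      exact absurd rfl hne
  · simp [hjr]

lemma dS_invSr (hT : T ∈ Sset n k) (hr : r ∈ InS k T) : dS T = dS (invSr T r) + 1 := by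
  obtain ⟨hr1, hrk⟩ := mem_In_range hr
  have hrO := r_mem_Out_invSr hT hr
  conv_lhs => rw [← Sr_invSr hT hr]
  exact dS_Sr (invSr_mem_Sset hT hr) hr1 hrk (mem_Out_gap hrO)

end InvSrAPI
section MinAPI

/-- predicates matching the filters in the statement -/
def isFree (n k : ℕ) (S : Finset ℕ) : Prop := InS k S = ∅ ∧ OutS n k S = ∅
def isMinOut (n k : ℕ) (S : Finset ℕ) : Prop :=
  ∃ i ∈ OutS n k S, ∀ j ∈ InS k S ∪ OutS n k S, i ≤ j
def isMinIn (n k : ℕ) (S : Finset ℕ) : Prop :=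
  ∃ i ∈ InS k S, ∀ j ∈ InS k S ∪ OutS n k S, i ≤ j

/-- the minimum of `In ∪ Out` (junk 0 if empty) -/
noncomputable def j0 (n k : ℕ) (S : Finset ℕ) : ℕ :=
  if h : (InS k S ∪ OutS n k S).Nonempty then (InS k S ∪ OutS n k S).min' h else 0

variable {n k : ℕ} {S : Finset ℕ}

lemma j0_min_out (h : isMinOut n k S) :
    j0 n k S ∈ OutS n k S ∧ ∀ j ∈ InS k S ∪ OutS n k S, j0 n k S ≤ j := by
  obtain ⟨i, hi, hmin⟩ := h
  have hne : (InS k S ∪ OutS n k S).Nonempty := ⟨i, Finset.mem_union_right _ hi⟩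
  rw [j0, dif_pos hne]
  have h1 : i ≤ (InS k S ∪ OutS n k S).min' hne :=
    hmin _ (Finset.min'_mem _ hne)
  have h2 : (InS k S ∪ OutS n k S).min' hne ≤ i :=
    Finset.min'_le _ _ (Finset.mem_union_right _ hi)
  have : (InS k S ∪ OutS n k S).min' hne = i := le_antisymm h2 h1
  rw [this]
  exact ⟨hi, hmin⟩

lemma j0_min_in (h : isMinIn n k S) :
    j0 n k S ∈ InS k S ∧ ∀ j ∈ InS k S ∪ OutS n k S, j0 n k S ≤ j := by
  obtain ⟨i, hi, hmin⟩ := h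
  have hne : (InS k S ∪ OutS n k S).Nonempty := ⟨i, Finset.mem_union_left _ hi⟩
  rw [j0, dif_pos hne]
  have h1 : i ≤ (InS k S ∪ OutS n k S).min' hne :=
    hmin _ (Finset.min'_mem _ hne)
  have h2 : (InS k S ∪ OutS n k S).min' hne ≤ i :=
    Finset.min'_le _ _ (Finset.mem_union_left _ hi)
  have : (InS k S ∪ OutS n k S).min' hne = i := le_antisymm h2 h1
  rw [this]
  exact ⟨hi, hmin⟩

lemma not_minIn_of_minOut (h : isMinOut n k S) : ¬ isMinIn n k S := by
  intro h'
  obtain ⟨i, hi, hmin⟩ := h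
  obtain ⟨i', hi', hmin'⟩ := h'
  have h1 : i ≤ i' := hmin _ (Finset.mem_union_left _ hi')
  have h2 : i' ≤ i := hmin' _ (Finset.mem_union_right _ hi)
  have : i = i' := le_antisymm h1 h2
  exact In_Out_disjoint i (this ▸ hi') hi

lemma not_free_of_minOut (h : isMinOut n k S) : ¬ isFree n k S := by
  obtain ⟨i, hi, _⟩ := h
  intro ⟨_, h2⟩
  rw [h2] at hi
  exact absurd hi (Finset.notMem_empty i)

lemma not_free_of_minIn (h : isMinIn n k S) : ¬ isFree n k S := by
  obtain ⟨i, hi, _⟩ := h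
  intro ⟨h1, _⟩
  rw [h1] at hi
  exact absurd hi (Finset.notMem_empty i)

lemma trichotomy (S : Finset ℕ) : isFree n k S ∨ isMinOut n k S ∨ isMinIn n k S := by
  by_cases hne : (InS k S ∪ OutS n k S).Nonempty
  · have hmem := Finset.min'_mem _ hne
    have hmin := fun j hj => Finset.min'_le (InS k S ∪ OutS n k S) j hj
    rw [Finset.mem_union] at hmem
    rcases hmem with h | h
    · exact Or.inr (Or.inr ⟨_, h, hmin⟩)
    · exact Or.inr (Or.inl ⟨_, h, hmin⟩)
  · rw [Finset.not_nonempty_iff_eq_empty, Finset.union_eq_empty] at hne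
    exact Or.inl ⟨hne.1, hne.2⟩

lemma Out_empty_of_free (h : isFree n k S) : OutS n k S = ∅ := h.2

/-- partner of a minOut set -/
lemma partner_minIn (hS : S ∈ Sset n k) (h : isMinOut n k S) :
    isMinIn n k (Sr S (j0 n k S)) ∧ j0 n k (Sr S (j0 n k S)) = j0 n k S ∧
    invSr (Sr S (j0 n k S)) (j0 n k S) = S ∧ Sr S (j0 n k S) ∈ Sset n k ∧
    dS (Sr S (j0 n k S)) = dS S + 1 := by
  obtain ⟨hj0out, hj0min⟩ := j0_min_out h
  set r := j0 n k S with hr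
  obtain ⟨hr1, hrk⟩ := mem_Out_range hj0out
  have hgap := mem_Out_gap hj0out
  have hT := Sr_mem_Sset hS hr1 hrk hgap
  have hunion : InS k (Sr S r) ∪ OutS n k (Sr S r) = InS k S ∪ OutS n k S := by
    rw [In_Sr hS hj0out, Out_Sr hS hj0out]
    ext j
    simp only [Finset.mem_union, Finset.mem_insert, Finset.mem_erase]
    constructor
    · rintro (h' | h')
      · rcases h' with h' | h'
        · exact Or.inr (h' ▸ hj0out)
        · exact Or.inl h'
      · exact Or.inr h'.2
    · rintro (h' | h')
      · exact Or.inl (Or.inr h')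
      · by_cases hjr : j = r
        · exact Or.inl (Or.inl hjr)
        · exact Or.inr ⟨hjr, h'⟩
  have hrIn : r ∈ InS k (Sr S r) := by
    rw [In_Sr hS hj0out]; exact Finset.mem_insert_self _ _
  have hminIn : isMinIn n k (Sr S r) := ⟨r, hrIn, by rw [hunion]; exact hj0min⟩
  refine ⟨hminIn, ?_, invSr_Sr hS hj0out, hT, dS_Sr hS hr1 hrk hgap⟩
  · -- j0 equal
    obtain ⟨hmem', hmin'⟩ := j0_min_in hminIn
    rw [hunion] at hmin'
    have h1 : j0 n k (Sr S r) ≤ r := by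
      apply hmin'
      rw [← hunion]
      exact Finset.mem_union_left _ hrIn
    have h2 : r ≤ j0 n k (Sr S r) := by
      apply hj0min
      rw [← hunion]
      exact Finset.mem_union_left _ hmem'
    omega

/-- copartner of a minIn set -/
lemma copartner_minOut (hT : T ∈ Sset n k) (h : isMinIn n k T) :
    isMinOut n k (invSr T (j0 n k T)) ∧ j0 n k (invSr T (j0 n k T)) = j0 n k T ∧
    Sr (invSr T (j0 n k T)) (j0 n k T) = T ∧ invSr T (j0 n k T) ∈ Sset n k ∧
    dS T = dS (invSr T (j0 n k T)) + 1 := by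
  obtain ⟨hj0in, hj0min⟩ := j0_min_in h
  set r := j0 n k T with hr
  have hW := invSr_mem_Sset hT hj0in
  have hrOut : r ∈ OutS n k (invSr T r) := r_mem_Out_invSr hT hj0in
  have hunion : InS k (invSr T r) ∪ OutS n k (invSr T r) = InS k T ∪ OutS n k T := by
    rw [In_invSr hT hj0in, Out_invSr hT hj0in]
    ext j
    simp only [Finset.mem_union, Finset.mem_insert, Finset.mem_erase]
    constructor
    · rintro (h' | h')
      · exact Or.inl h'.2
      · rcases h' with h' | h'
        · exact Or.inl (h' ▸ hj0in)
        · exact Or.inr h'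
    · rintro (h' | h')
      · by_cases hjr : j = r
        · exact Or.inr (Or.inl hjr)
        · exact Or.inl ⟨hjr, h'⟩
      · exact Or.inr (Or.inr h')
  have hminOut : isMinOut n k (invSr T r) := ⟨r, hrOut, by rw [hunion]; exact hj0min⟩
  refine ⟨hminOut, ?_, Sr_invSr hT hj0in, hW, dS_invSr hT hj0in⟩
  · obtain ⟨hmem', hmin'⟩ := j0_min_out hminOut
    rw [hunion] at hmin'
    have h1 : j0 n k (invSr T r) ≤ r := by
      apply hmin'
      rw [← hunion]
      exact Finset.mem_union_right _ hrOut
    have h2 : r ≤ j0 n k (invSr T r) := by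
      apply hj0min
      rw [← hunion]
      exact Finset.mem_union_right _ hmem'
    omega

/-- a minIn set has positive degree -/
lemma dS_pos_of_minIn (hT : T ∈ Sset n k) (h : isMinIn n k T) : 1 ≤ dS T := by
  obtain ⟨hj0in, _⟩ := j0_min_in h
  set r := j0 n k T with hr
  obtain ⟨hr1, hrk⟩ := mem_In_range hj0in
  have hg := mem_In_gap hj0in
  have helt : r + 1 ≤ elt T r := by
    rw [prv] at hg
    by_cases h1 : r = 1
    · rw [if_pos h1] at hg
      omega
    · rw [if_neg h1] at hg
      have := le_elt hT (i := r - 1) (by omega) (by omega)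
      omega
  have hmem : r ∈ Finset.Icc 1 k := by rw [Finset.mem_Icc]; exact ⟨hr1, hrk⟩
  have : elt T r - r ≤ ∑ i ∈ Finset.Icc 1 k, (elt T i - i) :=
    Finset.single_le_sum (f := fun i => elt T i - i) (fun i _ => Nat.zero_le _) hmem
  rw [dS, dr_eq hT]
  omega

end MinAPI
section MatrixDefs

variable (n k : ℕ) (R : Type*) [CommRing R]

/-- column coefficients of `(1/2) δ W` -/
noncomputable def qcol (W T : Finset ℕ) : R :=
  ∑ r ∈ Finset.Icc 1 k, if r ∈ OutS n k W ∧ T = Sr W r then (-1 : R) ^ dr W r else 0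

/-- the change-of-basis matrix coefficients -/
noncomputable def Qcoeff (T S : Finset ℕ) : R :=
  if isMinIn n k S then qcol n k R (invSr S (j0 n k S)) T else (if T = S then 1 else 0)

/-- the inverse change-of-basis matrix coefficients -/
noncomputable def Q'coeff (T S : Finset ℕ) : R :=
  if isMinIn n k S then
    (-1 : R) ^ dr (invSr S (j0 n k S)) (j0 n k S) *
      (∑ r ∈ Finset.Icc 1 k,
        if r ∈ OutS n k (invSr S (j0 n k S)) ∧ T = Sr (invSr S (j0 n k S)) r then
          (if r = j0 n k S then 1 else -((-1 : R) ^ dr (invSr S (j0 n k S)) r)) else 0)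
  else (if T = S then 1 else 0)

/-- the standard (matched) differential coefficients -/
noncomputable def Ecoeff (T S : Finset ℕ) : R :=
  if isMinOut n k S ∧ T = Sr S (j0 n k S) then 2 else 0

noncomputable def Qmat (m : ℕ) : Matrix (↥(Dfin n k m)) (↥(Dfin n k m)) R :=
  fun T S => Qcoeff n k R T.1 S.1

noncomputable def Q'mat (m : ℕ) : Matrix (↥(Dfin n k m)) (↥(Dfin n k m)) R :=
  fun T S => Q'coeff n k R T.1 S.1

noncomputable def Emat (m : ℕ) : Matrix (↥(Dfin n k (m+1))) (↥(Dfin n k m)) R :=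
  fun T S => Ecoeff n k R T.1 S.1

noncomputable def Dmat (m : ℕ) : Matrix (↥(Dfin n k (m+1))) (↥(Dfin n k m)) R :=
  fun T S => schubCoeff n k R T.1 S.1

lemma schubDeltaGr_eq (m : ℕ) :
    schubDeltaGr n k R m = Matrix.mulVecLin (Dmat n k R m) := rfl

end MatrixDefs

section Helpers

variable {n k : ℕ} {R : Type*} [CommRing R]

lemma mem_Dfin {S : Finset ℕ} {m : ℕ} :
    S ∈ Dfin n k m ↔ S ∈ Sset n k ∧ dS S = m := Finset.mem_filter

lemma sum_subtype_collapse {M : Type*} [AddCommMonoid M] {D : Finset (Finset ℕ)}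
    {a : Finset ℕ} (ha : a ∈ D) (f : Finset ℕ → M) :
    (∑ T : ↥D, if T.1 = a then f T.1 else 0) = f a := by
  rw [Fintype.sum_eq_single (⟨a, ha⟩ : ↥D)]
  · rw [if_pos rfl]
  · intro T hT
    rw [if_neg]
    intro h
    exact hT (Subtype.ext h)

/-- rewrite `schubCoeff` using `OutS` membership -/
lemma schubCoeff_eq {S : Finset ℕ} (hS : S ∈ Sset n k) (T : Finset ℕ) :
    schubCoeff n k R T S = ∑ r ∈ Finset.Icc 1 k,
      if r ∈ OutS n k S ∧ T = Sr S r then (-1 : R) ^ dr S r * 2 else 0 := by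
  apply Finset.sum_congr rfl
  intro r hr
  rw [Finset.mem_Icc] at hr
  have hiff := cond_iff_Out (r := r) hS hr.1 hr.2
  by_cases h : r ∈ OutS n k S ∧ T = Sr S r
  · rw [if_pos h, if_pos ⟨(hiff.mpr h.1).1, (hiff.mpr h.1).2, h.2⟩]
  · rw [if_neg h, if_neg]
    intro ⟨h1, h2, h3⟩
    exact h ⟨hiff.mp ⟨h1, h2⟩, h3⟩

lemma schubCoeff_eq_two_qcol {S : Finset ℕ} (hS : S ∈ Sset n k) (T : Finset ℕ) :
    schubCoeff n k R T S = 2 * qcol n k R S T := by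
  rw [schubCoeff_eq hS, qcol, Finset.mul_sum]
  apply Finset.sum_congr rfl
  intro r _
  by_cases h : r ∈ OutS n k S ∧ T = Sr S r
  · rw [if_pos h, if_pos h]
    ring
  · rw [if_neg h, if_neg h, mul_zero]

lemma schubCoeff_zero_of_free {S : Finset ℕ} (hS : S ∈ Sset n k) (hfree : OutS n k S = ∅)
    (T : Finset ℕ) : schubCoeff n k R T S = 0 := by
  rw [schubCoeff_eq hS]
  apply Finset.sum_eq_zero
  intro r _
  rw [if_neg]
  intro ⟨h1, _⟩
  rw [hfree] at h1
  exact Finset.notMem_empty r h1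

end Helpers
section CommAPI

variable {n k : ℕ} {W : Finset ℕ} {r i : ℕ}

lemma Sr_Sr_comm (hW : W ∈ Sset n k) (hr : r ∈ OutS n k W) (hi : i ∈ OutS n k W)
    (hir : i ≠ r) : Sr (Sr W r) i = Sr (Sr W i) r := by
  obtain ⟨hr1, hrk⟩ := mem_Out_range hr
  obtain ⟨hi1, hik⟩ := mem_Out_range hi
  have hgr := mem_Out_gap hr
  have hgi := mem_Out_gap hi
  have hWr := Sr_mem_Sset hW hr1 hrk hgr
  have hWi := Sr_mem_Sset hW hi1 hik hgi
  have hiO : i ∈ OutS n k (Sr W r) := by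
    rw [Out_Sr hW hr, Finset.mem_erase]; exact ⟨hir, hi⟩
  have hrO : r ∈ OutS n k (Sr W i) := by
    rw [Out_Sr hW hi, Finset.mem_erase]; exact ⟨fun h => hir h.symm, hr⟩
  have hgiO := mem_Out_gap hiO
  have hgrO := mem_Out_gap hrO
  apply eq_of_elt_eq (k := k) (card_Sr hWr hi1 hik hgiO) (card_Sr hWi hr1 hrk hgrO)
  intro j h1 h2
  by_cases hji : j = i
  · rw [hji, elt_Sr hWr hi1 hik hgiO i hi1 hik, if_pos rfl,
      elt_Sr hWi hr1 hrk hgrO i hi1 hik, if_neg (by omega),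
      elt_Sr hW hr1 hrk hgr i hi1 hik, if_neg (by omega),
      elt_Sr hW hi1 hik hgi i hi1 hik, if_pos rfl]
  · by_cases hjr : j = r
    · rw [hjr, elt_Sr hWr hi1 hik hgiO r hr1 hrk, if_neg (by omega),
        elt_Sr hWi hr1 hrk hgrO r hr1 hrk, if_pos rfl,
        elt_Sr hW hr1 hrk hgr r hr1 hrk, if_pos rfl,
        elt_Sr hW hi1 hik hgi r hr1 hrk, if_neg (by omega)]
    · rw [elt_Sr hWr hi1 hik hgiO j h1 h2, if_neg hji,
        elt_Sr hWi hr1 hrk hgrO j h1 h2, if_neg hjr,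
        elt_Sr hW hr1 hrk hgr j h1 h2, if_neg hjr,
        elt_Sr hW hi1 hik hgi j h1 h2, if_neg hji]

lemma union_Sr (hW : W ∈ Sset n k) (hr : r ∈ OutS n k W) :
    InS k (Sr W r) ∪ OutS n k (Sr W r) = InS k W ∪ OutS n k W := by
  rw [In_Sr hW hr, Out_Sr hW hr]
  ext j
  simp only [Finset.mem_union, Finset.mem_insert, Finset.mem_erase]
  constructor
  · rintro (h' | h')
    · rcases h' with h' | h'
      · exact Or.inr (h' ▸ hr)
      · exact Or.inl h'
    · exact Or.inr h'.2
  · rintro (h' | h')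
    · exact Or.inl (Or.inr h')
    · by_cases hjr : j = r
      · exact Or.inl (Or.inl hjr)
      · exact Or.inr ⟨hjr, h'⟩

lemma Sr_minOut_of_ne (hW : W ∈ Sset n k) (hWmin : isMinOut n k W) (hr : r ∈ OutS n k W)
    (hne : r ≠ j0 n k W) : isMinOut n k (Sr W r) := by
  obtain ⟨hj0out, hj0min⟩ := j0_min_out hWmin
  refine ⟨j0 n k W, ?_, ?_⟩
  · rw [Out_Sr hW hr, Finset.mem_erase]
    exact ⟨fun h => hne h.symm, hj0out⟩
  · intro j hj
    rw [union_Sr hW hr] at hj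
    exact hj0min j hj

end CommAPI

section Involution

variable {n k : ℕ} {R : Type*} [CommRing R]

/-- the δ² = 0 computation against a `qcol` column -/
lemma delta_qcol_zero {W : Finset ℕ} (hW : W ∈ Sset n k) {m : ℕ} (hWdeg : dS W + 1 = m)
    (U : Finset ℕ) :
    ∑ T : ↥(Dfin n k m), schubCoeff n k R U T.1 * qcol n k R W T.1 = 0 := by
  subst hWdeg
  set mW := dS W with hWdeg
  have hmemD : ∀ r ∈ OutS n k W, Sr W r ∈ Dfin n k (mW + 1) := by
    intro r hr
    obtain ⟨h1, h2⟩ := mem_Out_range hr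
    rw [mem_Dfin]
    exact ⟨Sr_mem_Sset hW h1 h2 (mem_Out_gap hr),
      by rw [dS_Sr hW h1 h2 (mem_Out_gap hr)]⟩
  have step1 : ∑ T : ↥(Dfin n k (mW + 1)), schubCoeff n k R U T.1 * qcol n k R W T.1
      = ∑ r ∈ Finset.Icc 1 k, (if r ∈ OutS n k W then
          (-1 : R) ^ dr W r * schubCoeff n k R U (Sr W r) else 0) := by
    simp_rw [qcol, Finset.mul_sum]
    rw [Finset.sum_comm]
    apply Finset.sum_congr rfl
    intro r _
    by_cases hr : r ∈ OutS n k W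
    · rw [if_pos hr]
      have : ∀ T : ↥(Dfin n k (mW + 1)),
          schubCoeff n k R U T.1 * (if r ∈ OutS n k W ∧ T.1 = Sr W r then (-1:R) ^ dr W r else 0)
          = if T.1 = Sr W r then schubCoeff n k R U T.1 * (-1:R) ^ dr W r else 0 := by
        intro T
        by_cases h : T.1 = Sr W r
        · rw [if_pos ⟨hr, h⟩, if_pos h]
        · rw [if_neg (fun hh => h hh.2), if_neg h, mul_zero]
      rw [Finset.sum_congr rfl (fun T _ => this T),
        sum_subtype_collapse (hmemD r hr) (fun X => schubCoeff n k R U X * (-1:R) ^ dr W r)]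
      ring
    · rw [if_neg hr]
      apply Finset.sum_eq_zero
      intro T _
      rw [if_neg (fun hh => hr hh.1), mul_zero]
  rw [step1]
  have step2 : ∀ r ∈ Finset.Icc 1 k,
      (if r ∈ OutS n k W then (-1 : R) ^ dr W r * schubCoeff n k R U (Sr W r) else 0)
      = ∑ i ∈ Finset.Icc 1 k,
          (if r ∈ OutS n k W ∧ i ∈ OutS n k W ∧ i ≠ r ∧ U = Sr (Sr W r) i then
            (-1 : R) ^ dr W r * ((-1 : R) ^ (dr W i + if i ≤ r then 1 else 0) * 2) else 0) := by
    intro r hrIcc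
    by_cases hr : r ∈ OutS n k W
    · rw [if_pos hr]
      obtain ⟨hr1, hrk⟩ := mem_Out_range hr
      have hWr := Sr_mem_Sset hW hr1 hrk (mem_Out_gap hr)
      rw [schubCoeff_eq hWr, Finset.mul_sum]
      apply Finset.sum_congr rfl
      intro i hiIcc
      rw [Finset.mem_Icc] at hiIcc
      by_cases h : i ∈ OutS n k (Sr W r) ∧ U = Sr (Sr W r) i
      · have hiW : i ∈ OutS n k W ∧ i ≠ r := by
          have := h.1
          rw [Out_Sr hW hr, Finset.mem_erase] at this
          exact ⟨this.2, this.1⟩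
        rw [if_pos h, if_pos ⟨hr, hiW.1, hiW.2, h.2⟩,
          dr_Sr hW hr1 hrk (mem_Out_gap hr) i hiIcc.1]
      · rw [if_neg h, if_neg, mul_zero]
        intro ⟨_, h1, h2, h3⟩
        exact h ⟨by rw [Out_Sr hW hr, Finset.mem_erase]; exact ⟨h2, h1⟩, h3⟩
    · rw [if_neg hr]
      symm
      apply Finset.sum_eq_zero
      intro i _
      rw [if_neg (fun hh => hr hh.1)]
  rw [Finset.sum_congr rfl step2, ← Finset.sum_product']
  apply Finset.sum_involution (fun p _ => Prod.swap p)
  · -- cancellation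
    intro p hp
    obtain ⟨r, i⟩ := p
    simp only [Prod.swap]
    have hcond : (r ∈ OutS n k W ∧ i ∈ OutS n k W ∧ i ≠ r ∧ U = Sr (Sr W r) i)
        ↔ (i ∈ OutS n k W ∧ r ∈ OutS n k W ∧ r ≠ i ∧ U = Sr (Sr W i) r) := by
      constructor
      · intro ⟨h1, h2, h3, h4⟩
        exact ⟨h2, h1, fun h => h3 h.symm, by rw [← Sr_Sr_comm hW h1 h2 h3]; exact h4⟩
      · intro ⟨h1, h2, h3, h4⟩
        exact ⟨h2, h1, fun h => h3 h.symm, by rw [Sr_Sr_comm hW h2 h1 (fun h => h3 h.symm)]; exact h4⟩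
    by_cases h : r ∈ OutS n k W ∧ i ∈ OutS n k W ∧ i ≠ r ∧ U = Sr (Sr W r) i
    · rw [if_pos h, if_pos (hcond.mp h)]
      have hir : i ≠ r := h.2.2.1
      rcases le_or_gt i r with hle | hlt
      · rw [if_pos hle, if_neg (by omega)]
        rw [pow_add, pow_add, pow_one, pow_zero]
        ring
      · rw [if_neg (by omega), if_pos (by omega)]
        rw [pow_add, pow_add, pow_one, pow_zero]
        ring
    · rw [if_neg h, if_neg (fun hh => h (hcond.mpr hh)), add_zero]
  · -- nonzero implies not fixed
    intro p hp hne
    obtain ⟨r, i⟩ := p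
    intro heq
    have hir2 : i = r := congrArg Prod.fst heq
    apply hne
    rw [if_neg]
    intro ⟨_, _, hir, _⟩
    exact hir hir2
  · -- swap stays in set
    intro p hp
    rw [Finset.mem_product] at hp ⊢
    exact ⟨hp.2, hp.1⟩
  · -- involutive
    intro p hp
    rfl

end Involution
section IdentityOne

variable {n k : ℕ} {R : Type*} [CommRing R]

lemma Qcoeff_partner {S : Finset ℕ} (hSset : S ∈ Sset n k) (hmo : isMinOut n k S)
    (U : Finset ℕ) :
    Qcoeff n k R U (Sr S (j0 n k S)) = qcol n k R S U := by
  obtain ⟨hmi, hj0eq, hinv, _, _⟩ := partner_minIn hSset hmo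
  rw [Qcoeff, if_pos hmi, hj0eq, hinv]

lemma DQ_eq_QE (m : ℕ) :
    Dmat n k R m * Qmat n k R m = Qmat n k R (m + 1) * Emat n k R m := by
  ext U S
  rw [Matrix.mul_apply, Matrix.mul_apply]
  obtain ⟨hSset, hSdeg⟩ := mem_Dfin.mp S.2
  have hRHS : ∑ T : ↥(Dfin n k (m+1)), Qmat n k R (m+1) U T * Emat n k R m T S
      = if isMinOut n k S.1 then Qcoeff n k R U.1 (Sr S.1 (j0 n k S.1)) * 2 else 0 := by
    by_cases hmo : isMinOut n k S.1
    · rw [if_pos hmo]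
      obtain ⟨_, _, _, hPset, hPdeg⟩ := partner_minIn hSset hmo
      have hPD : Sr S.1 (j0 n k S.1) ∈ Dfin n k (m+1) :=
        mem_Dfin.mpr ⟨hPset, by rw [hPdeg, hSdeg]⟩
      have hcong : ∀ T : ↥(Dfin n k (m+1)), Qmat n k R (m+1) U T * Emat n k R m T S
          = if T.1 = Sr S.1 (j0 n k S.1) then Qcoeff n k R U.1 T.1 * 2 else 0 := by
        intro T
        rw [Qmat, Emat, Ecoeff]
        by_cases h : T.1 = Sr S.1 (j0 n k S.1)
        · rw [if_pos ⟨hmo, h⟩, if_pos h]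
        · rw [if_neg (fun hh => h hh.2), if_neg h, mul_zero]
      rw [Finset.sum_congr rfl (fun T _ => hcong T),
        sum_subtype_collapse hPD (fun X => Qcoeff n k R U.1 X * 2)]
    · rw [if_neg hmo]
      apply Finset.sum_eq_zero
      intro T _
      rw [Qmat, Emat, Ecoeff, if_neg (fun hh => hmo hh.1), mul_zero]
  rw [hRHS]
  by_cases hmi : isMinIn n k S.1
  · -- S is minIn : LHS is the δ∘(half δ) = 0 computation
    rw [if_neg (fun h => not_minIn_of_minOut h hmi)]
    obtain ⟨hWmo, hj0eq, hSr, hWset, hdeg⟩ := copartner_minOut hSset hmi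
    have hcong : ∀ T : ↥(Dfin n k m), Dmat n k R m U T * Qmat n k R m T S
        = schubCoeff n k R U.1 T.1 * qcol n k R (invSr S.1 (j0 n k S.1)) T.1 := by
      intro T
      rw [Dmat, Qmat, Qcoeff, if_pos hmi]
    rw [Finset.sum_congr rfl (fun T _ => hcong T)]
    exact delta_qcol_zero hWset (by omega) U.1
  · -- S is free or minOut : Q column is a delta function
    have hcong : ∀ T : ↥(Dfin n k m), Dmat n k R m U T * Qmat n k R m T S
        = if T.1 = S.1 then schubCoeff n k R U.1 T.1 else 0 := by
      intro T
      rw [Dmat, Qmat, Qcoeff, if_neg hmi]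
      by_cases h : T.1 = S.1
      · rw [if_pos h, if_pos h, mul_one]
      · rw [if_neg h, if_neg h, mul_zero]
    rw [Finset.sum_congr rfl (fun T _ => hcong T),
      sum_subtype_collapse S.2 (fun X => schubCoeff n k R U.1 X)]
    by_cases hmo : isMinOut n k S.1
    · rw [if_pos hmo, Qcoeff_partner hSset hmo, schubCoeff_eq_two_qcol hSset]
      ring
    · rw [if_neg hmo]
      rcases trichotomy (n := n) (k := k) S.1 with hf | h | h
      · exact schubCoeff_zero_of_free hSset hf.2 U.1
      · exact absurd h hmo
      · exact absurd h hmi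

end IdentityOne
section IdentityTwo

variable {n k : ℕ} {R : Type*} [CommRing R]

/-- generic collapse of a sum against a `qcol`-shaped column -/
lemma sum_qcol_like {m : ℕ} {W : Finset ℕ} (hWD : ∀ r ∈ OutS n k W, Sr W r ∈ Dfin n k m)
    (g : Finset ℕ → R) (c : ℕ → R) :
    (∑ T : ↥(Dfin n k m), g T.1 *
      (∑ r ∈ Finset.Icc 1 k, if r ∈ OutS n k W ∧ T.1 = Sr W r then c r else 0))
    = ∑ r ∈ Finset.Icc 1 k, (if r ∈ OutS n k W then g (Sr W r) * c r else 0) := by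
  simp_rw [Finset.mul_sum]
  rw [Finset.sum_comm]
  apply Finset.sum_congr rfl
  intro r _
  by_cases hr : r ∈ OutS n k W
  · rw [if_pos hr]
    have hcong : ∀ T : ↥(Dfin n k m),
        g T.1 * (if r ∈ OutS n k W ∧ T.1 = Sr W r then c r else 0)
        = if T.1 = Sr W r then g T.1 * c r else 0 := by
      intro T
      by_cases h : T.1 = Sr W r
      · rw [if_pos ⟨hr, h⟩, if_pos h]
      · rw [if_neg (fun hh => h hh.2), if_neg h, mul_zero]
    rw [Finset.sum_congr rfl (fun T _ => hcong T),
      sum_subtype_collapse (hWD r hr) (fun X => g X * c r)]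
  · rw [if_neg hr]
    apply Finset.sum_eq_zero
    intro T _
    rw [if_neg (fun hh => hr hh.1), mul_zero]

/-- packaged data for a `minIn` column -/
lemma minIn_pack {m : ℕ} {S : Finset ℕ} (hSD : S ∈ Dfin n k m) (hmi : isMinIn n k S) :
    invSr S (j0 n k S) ∈ Sset n k ∧ isMinOut n k (invSr S (j0 n k S)) ∧
    j0 n k (invSr S (j0 n k S)) = j0 n k S ∧ Sr (invSr S (j0 n k S)) (j0 n k S) = S ∧
    j0 n k S ∈ OutS n k (invSr S (j0 n k S)) ∧
    (∀ r ∈ OutS n k (invSr S (j0 n k S)), Sr (invSr S (j0 n k S)) r ∈ Dfin n k m) := by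
  obtain ⟨hSset, hSdeg⟩ := mem_Dfin.mp hSD
  obtain ⟨hWmo, hj0eq, hSr, hWset, hdeg⟩ := copartner_minOut hSset hmi
  obtain ⟨hj0in, _⟩ := j0_min_in hmi
  have hj0Out : j0 n k S ∈ OutS n k (invSr S (j0 n k S)) := r_mem_Out_invSr hSset hj0in
  refine ⟨hWset, hWmo, hj0eq, hSr, hj0Out, ?_⟩
  intro r hr
  obtain ⟨h1, h2⟩ := mem_Out_range hr
  rw [mem_Dfin]
  refine ⟨Sr_mem_Sset hWset h1 h2 (mem_Out_gap hr), ?_⟩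
  rw [dS_Sr hWset h1 h2 (mem_Out_gap hr)]
  omega

lemma not_minIn_Wr {S : Finset ℕ} (hWset : invSr S (j0 n k S) ∈ Sset n k)
    (hWmo : isMinOut n k (invSr S (j0 n k S))) (hj0eq : j0 n k (invSr S (j0 n k S)) = j0 n k S)
    {r : ℕ} (hr : r ∈ OutS n k (invSr S (j0 n k S))) (hne : r ≠ j0 n k S) :
    ¬ isMinIn n k (Sr (invSr S (j0 n k S)) r) :=
  not_minIn_of_minOut (Sr_minOut_of_ne hWset hWmo hr (by rw [hj0eq]; exact hne))

lemma neg_one_sq_pow (a : ℕ) : ((-1 : R) ^ a) * ((-1 : R) ^ a) = 1 := by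
  rw [← pow_add]
  exact Even.neg_one_pow ⟨a, rfl⟩

lemma QQ'_eq_one (m : ℕ) : Qmat n k R m * Q'mat n k R m = 1 := by
  ext U S
  rw [Matrix.mul_apply, Matrix.one_apply]
  by_cases hmi : isMinIn n k S.1
  · obtain ⟨hWset, hWmo, hj0eq, hSrW, hj0Out, hWrD⟩ := minIn_pack S.2 hmi
    set W := invSr S.1 (j0 n k S.1) with hW
    set q := j0 n k S.1 with hq
    obtain ⟨hq1, hqk⟩ := mem_Out_range hj0Out
    have hqIcc : q ∈ Finset.Icc 1 k := by rw [Finset.mem_Icc]; exact ⟨hq1, hqk⟩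
    have hstep : ∀ T : ↥(Dfin n k m), Qmat n k R m U T * Q'mat n k R m T S
        = (-1 : R) ^ dr W q * (Qcoeff n k R U.1 T.1 *
            (∑ r ∈ Finset.Icc 1 k, if r ∈ OutS n k W ∧ T.1 = Sr W r then
              (if r = q then 1 else -((-1 : R) ^ dr W r)) else 0)) := by
      intro T
      rw [Qmat, Q'mat, Q'coeff, if_pos hmi]
      ring
    rw [Finset.sum_congr rfl (fun T _ => hstep T), ← Finset.mul_sum,
      sum_qcol_like hWrD (Qcoeff n k R U.1) (fun r => if r = q then 1 else -((-1:R) ^ dr W r)),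
      ← Finset.add_sum_erase _ _ hqIcc, if_pos hj0Out, if_pos rfl, hSrW, mul_one]
    -- Qcoeff U S = qcol W U
    have hQS : Qcoeff n k R U.1 S.1 = qcol n k R W U.1 := by
      rw [Qcoeff, if_pos hmi]
    -- erase sum
    have herase : ∑ r ∈ (Finset.Icc 1 k).erase q,
        (if r ∈ OutS n k W then Qcoeff n k R U.1 (Sr W r) *
          (if r = q then 1 else -((-1:R) ^ dr W r)) else 0)
        = -∑ r ∈ (Finset.Icc 1 k).erase q,
            (if r ∈ OutS n k W ∧ U.1 = Sr W r then (-1:R) ^ dr W r else 0) := by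
      rw [← Finset.sum_neg_distrib]
      apply Finset.sum_congr rfl
      intro r hr
      rw [Finset.mem_erase] at hr
      by_cases hrO : r ∈ OutS n k W
      · rw [if_pos hrO, if_neg hr.1]
        have hQd : Qcoeff n k R U.1 (Sr W r) = (if U.1 = Sr W r then 1 else 0) := by
          rw [Qcoeff, if_neg (not_minIn_Wr hWset hWmo hj0eq hrO hr.1)]
        rw [hQd]
        by_cases h : U.1 = Sr W r
        · rw [if_pos h, if_pos ⟨hrO, h⟩]
          ring
        · rw [if_neg h, if_neg (fun hh => h hh.2)]
          ring
      · rw [if_neg hrO, if_neg (fun hh => hrO hh.1), neg_zero]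
    have hsplit : (∑ r ∈ Finset.Icc 1 k,
        (if r ∈ OutS n k W ∧ U.1 = Sr W r then (-1:R) ^ dr W r else 0))
        = (if U.1 = S.1 then (-1:R) ^ dr W q else 0)
          + ∑ r ∈ (Finset.Icc 1 k).erase q,
              (if r ∈ OutS n k W ∧ U.1 = Sr W r then (-1:R) ^ dr W r else 0) := by
      rw [← Finset.add_sum_erase _ _ hqIcc]
      congr 1
      rw [hSrW]
      by_cases h : U.1 = S.1
      · rw [if_pos ⟨hj0Out, h⟩, if_pos h]
      · rw [if_neg (fun hh => h hh.2), if_neg h]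
    rw [herase, hQS, qcol, hsplit]
    by_cases h : U.1 = S.1
    · rw [if_pos h, if_pos (Subtype.ext h)]
      have := neg_one_sq_pow (R := R) (dr W q)
      set x := ∑ r ∈ (Finset.Icc 1 k).erase q,
        (if r ∈ OutS n k W ∧ U.1 = Sr W r then (-1:R) ^ dr W r else 0)
      linear_combination this
    · rw [if_neg h, if_neg (fun hh => h (congrArg Subtype.val hh))]
      ring
  · have hcong : ∀ T : ↥(Dfin n k m), Qmat n k R m U T * Q'mat n k R m T S
        = if T.1 = S.1 then Qcoeff n k R U.1 T.1 else 0 := by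
      intro T
      rw [Qmat, Q'mat, Q'coeff, if_neg hmi]
      by_cases h : T.1 = S.1
      · rw [if_pos h, if_pos h, mul_one]
      · rw [if_neg h, if_neg h, mul_zero]
    rw [Finset.sum_congr rfl (fun T _ => hcong T),
      sum_subtype_collapse S.2 (fun X => Qcoeff n k R U.1 X), Qcoeff, if_neg hmi]
    by_cases h : U.1 = S.1
    · rw [if_pos h, if_pos (Subtype.ext h)]
    · rw [if_neg h, if_neg (fun hh => h (congrArg Subtype.val hh))]

end IdentityTwo
section IdentityThree

variable {n k : ℕ} {R : Type*} [CommRing R]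

lemma Q'Q_eq_one (m : ℕ) : Q'mat n k R m * Qmat n k R m = 1 := by
  ext U S
  rw [Matrix.mul_apply, Matrix.one_apply]
  by_cases hmi : isMinIn n k S.1
  · obtain ⟨hWset, hWmo, hj0eq, hSrW, hj0Out, hWrD⟩ := minIn_pack S.2 hmi
    set W := invSr S.1 (j0 n k S.1) with hW
    set q := j0 n k S.1 with hq
    obtain ⟨hq1, hqk⟩ := mem_Out_range hj0Out
    have hqIcc : q ∈ Finset.Icc 1 k := by rw [Finset.mem_Icc]; exact ⟨hq1, hqk⟩
    have hstep : ∀ T : ↥(Dfin n k m), Q'mat n k R m U T * Qmat n k R m T S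
        = Q'coeff n k R U.1 T.1 *
            (∑ r ∈ Finset.Icc 1 k, if r ∈ OutS n k W ∧ T.1 = Sr W r then
              (-1 : R) ^ dr W r else 0) := by
      intro T
      rw [Q'mat, Qmat, Qcoeff, if_pos hmi, qcol]
    rw [Finset.sum_congr rfl (fun T _ => hstep T),
      sum_qcol_like hWrD (Q'coeff n k R U.1) (fun r => (-1:R) ^ dr W r),
      ← Finset.add_sum_erase _ _ hqIcc, if_pos hj0Out, hSrW]
    have hQ'S : Q'coeff n k R U.1 S.1 = (-1:R) ^ dr W q *
        (∑ r ∈ Finset.Icc 1 k, if r ∈ OutS n k W ∧ U.1 = Sr W r then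
          (if r = q then 1 else -((-1 : R) ^ dr W r)) else 0) := by
      rw [Q'coeff, if_pos hmi]
    have hsplitc : (∑ r ∈ Finset.Icc 1 k, if r ∈ OutS n k W ∧ U.1 = Sr W r then
          (if r = q then 1 else -((-1 : R) ^ dr W r)) else 0)
        = (if U.1 = S.1 then (1:R) else 0)
          + ∑ r ∈ (Finset.Icc 1 k).erase q, (if r ∈ OutS n k W ∧ U.1 = Sr W r then
              (if r = q then 1 else -((-1 : R) ^ dr W r)) else 0) := by
      rw [← Finset.add_sum_erase _ _ hqIcc]
      congr 1
      rw [hSrW]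
      by_cases h : U.1 = S.1
      · rw [if_pos ⟨hj0Out, h⟩, if_pos rfl, if_pos h]
      · rw [if_neg (fun hh => h hh.2), if_neg h]
    have herase1 : (∑ r ∈ (Finset.Icc 1 k).erase q, (if r ∈ OutS n k W ∧ U.1 = Sr W r then
          (if r = q then 1 else -((-1 : R) ^ dr W r)) else 0))
        = -∑ r ∈ (Finset.Icc 1 k).erase q,
            (if r ∈ OutS n k W ∧ U.1 = Sr W r then (-1 : R) ^ dr W r else 0) := by
      rw [← Finset.sum_neg_distrib]
      apply Finset.sum_congr rfl
      intro r hr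
      rw [Finset.mem_erase] at hr
      by_cases h : r ∈ OutS n k W ∧ U.1 = Sr W r
      · rw [if_pos h, if_pos h, if_neg hr.1]
      · rw [if_neg h, if_neg h, neg_zero]
    have herase2 : (∑ r ∈ (Finset.Icc 1 k).erase q,
          (if r ∈ OutS n k W then Q'coeff n k R U.1 (Sr W r) * (-1:R) ^ dr W r else 0))
        = ∑ r ∈ (Finset.Icc 1 k).erase q,
            (if r ∈ OutS n k W ∧ U.1 = Sr W r then (-1 : R) ^ dr W r else 0) := by
      apply Finset.sum_congr rfl
      intro r hr
      rw [Finset.mem_erase] at hr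
      by_cases hrO : r ∈ OutS n k W
      · rw [if_pos hrO, Q'coeff, if_neg (not_minIn_Wr hWset hWmo hj0eq hrO hr.1)]
        by_cases h : U.1 = Sr W r
        · rw [if_pos h, if_pos ⟨hrO, h⟩, one_mul]
        · rw [if_neg h, if_neg (fun hh => h hh.2), zero_mul]
      · rw [if_neg hrO, if_neg (fun hh => hrO hh.1)]
    rw [herase2, hQ'S, hsplitc, herase1]
    have hsq := neg_one_sq_pow (R := R) (dr W q)
    set x := ∑ r ∈ (Finset.Icc 1 k).erase q,
        (if r ∈ OutS n k W ∧ U.1 = Sr W r then (-1 : R) ^ dr W r else 0) with hx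
    by_cases h : U.1 = S.1
    · rw [if_pos h, if_pos (Subtype.ext h)]
      linear_combination (1 - x) * hsq
    · rw [if_neg h, if_neg (fun hh => h (congrArg Subtype.val hh))]
      linear_combination (-x) * hsq
  · have hcong : ∀ T : ↥(Dfin n k m), Q'mat n k R m U T * Qmat n k R m T S
        = if T.1 = S.1 then Q'coeff n k R U.1 T.1 else 0 := by
      intro T
      rw [Q'mat, Qmat, Qcoeff, if_neg hmi]
      by_cases h : T.1 = S.1
      · rw [if_pos h, if_pos h, mul_one]
      · rw [if_neg h, if_neg h, mul_zero]
    rw [Finset.sum_congr rfl (fun T _ => hcong T),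
      sum_subtype_collapse S.2 (fun X => Q'coeff n k R U.1 X), Q'coeff, if_neg hmi]
    by_cases h : U.1 = S.1
    · rw [if_pos h, if_pos (Subtype.ext h)]
    · rw [if_neg h, if_neg (fun hh => h (congrArg Subtype.val hh))]

end IdentityThree
section Elayer

variable {n k : ℕ} {R : Type*} [CommRing R]

noncomputable def Elin (n k : ℕ) (R : Type*) [CommRing R] (m : ℕ) :
    Cgr n k R m →ₗ[R] Cgr n k R (m+1) := Matrix.mulVecLin (Emat n k R m)

lemma sum_subtype_collapse' {M : Type*} [AddCommMonoid M] {D : Finset (Finset ℕ)}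
    {a : Finset ℕ} (ha : a ∈ D) (f : ↥D → M) :
    (∑ T : ↥D, if T.1 = a then f T else 0) = f ⟨a, ha⟩ := by
  rw [Fintype.sum_eq_single (⟨a, ha⟩ : ↥D)]
  · rw [if_pos rfl]
  · intro T hT
    rw [if_neg (fun h => hT (Subtype.ext h))]

lemma coptn_mem {m : ℕ} {T : Finset ℕ} (hTD : T ∈ Dfin n k (m+1)) (h : isMinIn n k T) :
    invSr T (j0 n k T) ∈ Dfin n k m := by
  obtain ⟨hTset, hTdeg⟩ := mem_Dfin.mp hTD
  obtain ⟨_, _, _, hWset, hdeg⟩ := copartner_minOut hTset h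
  rw [mem_Dfin]
  exact ⟨hWset, by omega⟩

lemma ptn_mem {m : ℕ} {S : Finset ℕ} (hSD : S ∈ Dfin n k m) (h : isMinOut n k S) :
    Sr S (j0 n k S) ∈ Dfin n k (m+1) := by
  obtain ⟨hSset, hSdeg⟩ := mem_Dfin.mp hSD
  obtain ⟨_, _, _, hPset, hPdeg⟩ := partner_minIn hSset h
  rw [mem_Dfin]
  exact ⟨hPset, by omega⟩

lemma E_cond_iff {m : ℕ} {S T : Finset ℕ} (hSD : S ∈ Dfin n k m)
    (hTD : T ∈ Dfin n k (m+1)) :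
    (isMinOut n k S ∧ T = Sr S (j0 n k S)) ↔ (isMinIn n k T ∧ S = invSr T (j0 n k T)) := by
  obtain ⟨hSset, _⟩ := mem_Dfin.mp hSD
  obtain ⟨hTset, _⟩ := mem_Dfin.mp hTD
  constructor
  · intro ⟨hmo, hT⟩
    obtain ⟨hmi, hj0eq, hinv, _, _⟩ := partner_minIn hSset hmo
    subst hT
    exact ⟨hmi, by rw [hj0eq, hinv]⟩
  · intro ⟨hmi, hS⟩
    obtain ⟨hmo, hj0eq, hSr, _, _⟩ := copartner_minOut hTset hmi
    subst hS
    exact ⟨hmo, by rw [hj0eq, hSr]⟩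

lemma Elin_apply (m : ℕ) (v : Cgr n k R m) (T : ↥(Dfin n k (m+1))) :
    Elin n k R m v T = if h : isMinIn n k T.1 then
      2 * v ⟨invSr T.1 (j0 n k T.1), coptn_mem T.2 h⟩ else 0 := by
  rw [Elin, Matrix.mulVecLin_apply]
  show (∑ S : ↥(Dfin n k m), Emat n k R m T S * v S) = _
  by_cases h : isMinIn n k T.1
  · rw [dif_pos h]
    have hcong : ∀ S : ↥(Dfin n k m), Emat n k R m T S * v S
        = if S.1 = invSr T.1 (j0 n k T.1) then 2 * v S else 0 := by
      intro S
      rw [Emat, Ecoeff]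
      by_cases hc : isMinOut n k S.1 ∧ T.1 = Sr S.1 (j0 n k S.1)
      · rw [if_pos hc, if_pos ((E_cond_iff S.2 T.2).mp hc).2]
      · rw [if_neg hc, if_neg, zero_mul]
        intro hS
        exact hc ((E_cond_iff S.2 T.2).mpr ⟨h, hS⟩)
    rw [Finset.sum_congr rfl (fun S _ => hcong S),
      sum_subtype_collapse' (coptn_mem T.2 h) (fun S => 2 * v S)]
  · rw [dif_neg h]
    apply Finset.sum_eq_zero
    intro S _
    rw [Emat, Ecoeff, if_neg, zero_mul]
    intro hc
    exact h ((E_cond_iff S.2 T.2).mp hc).1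

lemma mem_ker_Elin (m : ℕ) (v : Cgr n k R m) :
    v ∈ LinearMap.ker (Elin n k R m) ↔
      ∀ S : ↥(Dfin n k m), isMinOut n k S.1 → 2 * v S = 0 := by
  rw [LinearMap.mem_ker]
  constructor
  · intro hv S hmo
    obtain ⟨hSset, _⟩ := mem_Dfin.mp S.2
    obtain ⟨hmi, hj0eq, hinv, _, _⟩ := partner_minIn hSset hmo
    have hTD : Sr S.1 (j0 n k S.1) ∈ Dfin n k (m+1) := ptn_mem S.2 hmo
    have := congrFun hv ⟨_, hTD⟩
    rw [Elin_apply, dif_pos hmi] at this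
    have hval : (⟨invSr (Sr S.1 (j0 n k S.1)) (j0 n k (Sr S.1 (j0 n k S.1))),
        coptn_mem hTD hmi⟩ : ↥(Dfin n k m)) = S := by
      apply Subtype.ext
      show invSr _ _ = S.1
      rw [hj0eq, hinv]
    rw [hval] at this
    exact this
  · intro hv
    funext T
    rw [Elin_apply]
    by_cases h : isMinIn n k T.1
    · rw [dif_pos h]
      obtain ⟨hTset, _⟩ := mem_Dfin.mp T.2
      obtain ⟨hmo, _, _, _, _⟩ := copartner_minOut hTset h
      exact hv _ hmo
    · rw [dif_neg h]
      rfl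

lemma mem_range_Elin (m : ℕ) (w : Cgr n k R (m+1)) :
    w ∈ LinearMap.range (Elin n k R m) ↔
      ∀ T : ↥(Dfin n k (m+1)),
        (isMinIn n k T.1 → ∃ r : R, w T = 2 * r) ∧ (¬ isMinIn n k T.1 → w T = 0) := by
  constructor
  · rintro ⟨v, rfl⟩ T
    rw [Elin_apply]
    constructor
    · intro h
      rw [dif_pos h]
      exact ⟨_, rfl⟩
    · intro h
      rw [dif_neg h]
  · intro hw
    refine ⟨fun S => if h : isMinOut n k S.1 then
        Classical.choose ((hw ⟨Sr S.1 (j0 n k S.1), ptn_mem S.2 h⟩).1 ?_) else 0, ?_⟩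
    · obtain ⟨hSset, _⟩ := mem_Dfin.mp S.2
      exact (partner_minIn hSset h).1
    · funext T
      rw [Elin_apply]
      by_cases h : isMinIn n k T.1
      · rw [dif_pos h]
        obtain ⟨hTset, _⟩ := mem_Dfin.mp T.2
        obtain ⟨hmo, hj0eq, hSr, hWset, _⟩ := copartner_minOut hTset h
        rw [dif_pos hmo]
        have hTeq : (⟨Sr (invSr T.1 (j0 n k T.1)) (j0 n k (invSr T.1 (j0 n k T.1))),
            ptn_mem (coptn_mem T.2 h) hmo⟩ : ↥(Dfin n k (m+1))) = T := by
          apply Subtype.ext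
          show Sr _ _ = T.1
          rw [hj0eq, hSr]
        have hspec := Classical.choose_spec
          ((hw ⟨Sr (invSr T.1 (j0 n k T.1)) (j0 n k (invSr T.1 (j0 n k T.1))),
            ptn_mem (coptn_mem T.2 h) hmo⟩).1 (by rw [hTeq]; exact h))
        exact hspec.symm.trans (congrArg w hTeq)
      · rw [dif_neg h]
        exact ((hw T).2 h).symm

end Elayer
section PhiLayer

variable {n k : ℕ} {R : Type*} [CommRing R]

lemma mem_freeIdxGr {m : ℕ} {S : Finset ℕ} :
    S ∈ freeIdxGr n k m ↔ S ∈ Dfin n k m ∧ isFree n k S := Finset.mem_filter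

lemma mem_minOutIdxGr {m : ℕ} {S : Finset ℕ} :
    S ∈ minOutIdxGr n k m ↔ S ∈ Dfin n k m ∧ isMinOut n k S := Finset.mem_filter

lemma mem_minInIdxGr {m : ℕ} {S : Finset ℕ} :
    S ∈ minInIdxGr n k m ↔ S ∈ Dfin n k m ∧ isMinIn n k S := Finset.mem_filter

lemma two_apply (r : R) : two R r = 2 * r := by
  rw [two, LinearMap.lsmul_apply, smul_eq_mul]

/-- the comparison map from the kernel of `E` to the product module -/
noncomputable def phi (n k : ℕ) (R : Type*) [CommRing R] (m : ℕ) :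
    ↥(LinearMap.ker (Elin n k R m)) →ₗ[R]
      ((↥(freeIdxGr n k m) → R) × (↥(minOutIdxGr n k m) → ↥(LinearMap.ker (two R))) ×
       (↥(minInIdxGr n k m) → R ⧸ LinearMap.range (two R))) where
  toFun x :=
    (fun S => x.1 ⟨S.1, (mem_freeIdxGr.mp S.2).1⟩,
     fun S => ⟨x.1 ⟨S.1, (mem_minOutIdxGr.mp S.2).1⟩, by
        rw [LinearMap.mem_ker, two_apply]
        exact (mem_ker_Elin m x.1).mp x.2 _ (mem_minOutIdxGr.mp S.2).2⟩,
     fun S => Submodule.Quotient.mk (x.1 ⟨S.1, (mem_minInIdxGr.mp S.2).1⟩))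
  map_add' x y := by
    refine Prod.ext (funext fun S => rfl) (Prod.ext (funext fun S => Subtype.ext rfl)
      (funext fun S => ?_))
    show (Submodule.Quotient.mk _ : R ⧸ LinearMap.range (two R)) =
      Submodule.Quotient.mk _ + Submodule.Quotient.mk _
    rw [← Submodule.Quotient.mk_add]
    rfl
  map_smul' c x := by
    refine Prod.ext (funext fun S => rfl) (Prod.ext (funext fun S => Subtype.ext rfl)
      (funext fun S => ?_))
    show (Submodule.Quotient.mk _ : R ⧸ LinearMap.range (two R)) = c • Submodule.Quotient.mk _
    rw [← Submodule.Quotient.mk_smul]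
    rfl

lemma phi_surjective (m : ℕ) : Function.Surjective (phi n k R m) := by
  rintro ⟨a, b, c⟩
  have hrep : ∀ S : ↥(minInIdxGr n k m), ∃ r : R, Submodule.Quotient.mk r = c S :=
    fun S => Submodule.Quotient.mk_surjective _ (c S)
  refine ⟨⟨fun S => if h : S.1 ∈ freeIdxGr n k m then a ⟨S.1, h⟩
      else if h : S.1 ∈ minOutIdxGr n k m then (b ⟨S.1, h⟩).1
      else if h : S.1 ∈ minInIdxGr n k m then Classical.choose (hrep ⟨S.1, h⟩) else 0, ?_⟩, ?_⟩
  · -- in kernel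
    rw [mem_ker_Elin]
    intro S hmo
    have h1 : S.1 ∉ freeIdxGr n k m :=
      fun h => not_free_of_minOut hmo (mem_freeIdxGr.mp h).2
    have h2 : S.1 ∈ minOutIdxGr n k m := mem_minOutIdxGr.mpr ⟨S.2, hmo⟩
    rw [dif_neg h1, dif_pos h2]
    have := (b ⟨S.1, h2⟩).2
    rw [LinearMap.mem_ker, two_apply] at this
    exact this
  · refine Prod.ext (funext fun S => ?_) (Prod.ext (funext fun S => Subtype.ext ?_)
      (funext fun S => ?_))
    · show (if h : S.1 ∈ freeIdxGr n k m then a ⟨S.1, h⟩ else _) = a S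
      rw [dif_pos S.2]
    · obtain ⟨hD, hmo⟩ := mem_minOutIdxGr.mp S.2
      have h1 : S.1 ∉ freeIdxGr n k m :=
        fun h => not_free_of_minOut hmo (mem_freeIdxGr.mp h).2
      show (if h : S.1 ∈ freeIdxGr n k m then a ⟨S.1, h⟩ else _) = (b S).1
      rw [dif_neg h1, dif_pos S.2]
    · obtain ⟨hD, hmi⟩ := mem_minInIdxGr.mp S.2
      have h1 : S.1 ∉ freeIdxGr n k m :=
        fun h => not_free_of_minIn hmi (mem_freeIdxGr.mp h).2
      have h2 : S.1 ∉ minOutIdxGr n k m :=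
        fun h => not_minIn_of_minOut (mem_minOutIdxGr.mp h).2 hmi
      show Submodule.Quotient.mk (if h : S.1 ∈ freeIdxGr n k m then a ⟨S.1, h⟩ else _) = c S
      rw [dif_neg h1, dif_neg h2, dif_pos S.2]
      exact Classical.choose_spec (hrep S)

/-- the coboundaries for `E` -/
noncomputable def BE (n k : ℕ) (R : Type*) [CommRing R] :
    (m : ℕ) → Submodule R (Cgr n k R m)
  | 0 => ⊥
  | (m + 1) => LinearMap.range (Elin n k R m)

lemma ker_phi (m : ℕ) : LinearMap.ker (phi n k R m)
    = Submodule.comap (LinearMap.ker (Elin n k R m)).subtype (BE n k R m) := by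
  ext x
  rw [LinearMap.mem_ker, Submodule.mem_comap]
  have hiff : phi n k R m x = 0 ↔
      (∀ S : ↥(freeIdxGr n k m), x.1 ⟨S.1, (mem_freeIdxGr.mp S.2).1⟩ = 0) ∧
      (∀ S : ↥(minOutIdxGr n k m), x.1 ⟨S.1, (mem_minOutIdxGr.mp S.2).1⟩ = 0) ∧
      (∀ S : ↥(minInIdxGr n k m), x.1 ⟨S.1, (mem_minInIdxGr.mp S.2).1⟩
        ∈ LinearMap.range (two R)) := by
    rw [Prod.ext_iff, Prod.ext_iff]
    simp only [funext_iff]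
    constructor
    · intro ⟨h1, h2, h3⟩
      refine ⟨fun S => h1 S, fun S => congrArg Subtype.val (h2 S), fun S => ?_⟩
      rw [← Submodule.Quotient.mk_eq_zero]
      exact h3 S
    · intro ⟨h1, h2, h3⟩
      refine ⟨fun S => h1 S, fun S => Subtype.ext (h2 S), fun S => ?_⟩
      show Submodule.Quotient.mk _ = 0
      rw [Submodule.Quotient.mk_eq_zero]
      exact h3 S
  rw [hiff]
  match m with
  | 0 =>
    show _ ↔ x.1 ∈ (⊥ : Submodule R (Cgr n k R 0))
    rw [Submodule.mem_bot]
    constructor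
    · intro ⟨h1, h2, h3⟩
      funext S
      rcases trichotomy (n := n) (k := k) S.1 with hf | hmo | hmi
      · exact h1 ⟨S.1, mem_freeIdxGr.mpr ⟨S.2, hf⟩⟩
      · exact h2 ⟨S.1, mem_minOutIdxGr.mpr ⟨S.2, hmo⟩⟩
      · exfalso
        obtain ⟨hSset, hSdeg⟩ := mem_Dfin.mp S.2
        have := dS_pos_of_minIn hSset hmi
        omega
    · intro h
      rw [h]
      exact ⟨fun S => rfl, fun S => rfl, fun S => Submodule.zero_mem _⟩
  | (mm + 1) =>
    show _ ↔ x.1 ∈ LinearMap.range (Elin n k R mm)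
    rw [mem_range_Elin]
    constructor
    · intro ⟨h1, h2, h3⟩ T
      constructor
      · intro hmi
        have := h3 ⟨T.1, mem_minInIdxGr.mpr ⟨T.2, hmi⟩⟩
        obtain ⟨r, hr⟩ := this
        rw [two_apply] at hr
        exact ⟨r, hr.symm⟩
      · intro hnmi
        rcases trichotomy (n := n) (k := k) T.1 with hf | hmo | hmi
        · exact h1 ⟨T.1, mem_freeIdxGr.mpr ⟨T.2, hf⟩⟩
        · exact h2 ⟨T.1, mem_minOutIdxGr.mpr ⟨T.2, hmo⟩⟩
        · exact absurd hmi hnmi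
    · intro h
      refine ⟨fun S => (h _).2 (fun hmi => not_free_of_minIn hmi (mem_freeIdxGr.mp S.2).2),
        fun S => (h _).2 (fun hmi => not_minIn_of_minOut (mem_minOutIdxGr.mp S.2).2 hmi),
        fun S => ?_⟩
      obtain ⟨r, hr⟩ := (h ⟨S.1, (mem_minInIdxGr.mp S.2).1⟩).1 (mem_minInIdxGr.mp S.2).2
      exact ⟨r, by rw [two_apply, ← hr]⟩

/-- quotient of `ker E` by `BE` is the product module -/
noncomputable def heEquiv (m : ℕ) :
    (↥(LinearMap.ker (Elin n k R m)) ⧸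
      Submodule.comap (LinearMap.ker (Elin n k R m)).subtype (BE n k R m)) ≃ₗ[R]
    ((↥(freeIdxGr n k m) → R) × (↥(minOutIdxGr n k m) → ↥(LinearMap.ker (two R))) ×
     (↥(minInIdxGr n k m) → R ⧸ LinearMap.range (two R))) :=
  (Submodule.quotEquivOfEq _ _ (ker_phi m).symm).trans
    ((phi n k R m).quotKerEquivOfSurjective (phi_surjective m))

end PhiLayer
section Transport

variable {n k : ℕ} {R : Type*} [CommRing R]

noncomputable def Qequiv (n k : ℕ) (R : Type*) [CommRing R] (m : ℕ) :
    Cgr n k R m ≃ₗ[R] Cgr n k R m :=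
  LinearEquiv.ofLinear (Matrix.mulVecLin (Qmat n k R m)) (Matrix.mulVecLin (Q'mat n k R m))
    (by rw [← Matrix.mulVecLin_mul, QQ'_eq_one, Matrix.mulVecLin_one])
    (by rw [← Matrix.mulVecLin_mul, Q'Q_eq_one, Matrix.mulVecLin_one])

lemma delta_Q (m : ℕ) (v : Cgr n k R m) :
    schubDeltaGr n k R m (Qequiv n k R m v) = Qequiv n k R (m+1) (Elin n k R m v) := by
  have h := congrArg Matrix.mulVecLin (DQ_eq_QE (n := n) (k := k) (R := R) m)
  rw [Matrix.mulVecLin_mul, Matrix.mulVecLin_mul] at h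
  exact LinearMap.congr_fun h v

lemma ker_delta_eq (m : ℕ) :
    LinearMap.ker (schubDeltaGr n k R m)
      = Submodule.map (Qequiv n k R m : Cgr n k R m →ₗ[R] Cgr n k R m)
          (LinearMap.ker (Elin n k R m)) := by
  ext x
  rw [LinearMap.mem_ker, Submodule.mem_map]
  constructor
  · intro hx
    refine ⟨(Qequiv n k R m).symm x, ?_, by simp⟩
    rw [LinearMap.mem_ker]
    have h : schubDeltaGr n k R m (Qequiv n k R m ((Qequiv n k R m).symm x)) = 0 := by
      rw [LinearEquiv.apply_symm_apply]
      exact hx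
    rw [delta_Q] at h
    exact (LinearEquiv.map_eq_zero_iff _).mp h
  · rintro ⟨z, hz, rfl⟩
    show schubDeltaGr n k R m (Qequiv n k R m z) = 0
    rw [delta_Q, show Elin n k R m z = 0 from hz]
    exact map_zero _

lemma range_delta_eq (m : ℕ) :
    LinearMap.range (schubDeltaGr n k R m)
      = Submodule.map (Qequiv n k R (m+1) : Cgr n k R (m+1) →ₗ[R] Cgr n k R (m+1))
          (LinearMap.range (Elin n k R m)) := by
  ext y
  rw [LinearMap.mem_range, Submodule.mem_map]
  constructor
  · rintro ⟨x, rfl⟩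
    refine ⟨Elin n k R m ((Qequiv n k R m).symm x), ⟨_, rfl⟩, ?_⟩
    show Qequiv n k R (m+1) (Elin n k R m ((Qequiv n k R m).symm x)) = _
    rw [← delta_Q, LinearEquiv.apply_symm_apply]
  · rintro ⟨w, ⟨v, rfl⟩, rfl⟩
    exact ⟨Qequiv n k R m v, (delta_Q m v).symm ▸ (delta_Q m v)⟩

lemma Bsub_eq (m : ℕ) :
    Bsub n k R m = Submodule.map (Qequiv n k R m : Cgr n k R m →ₗ[R] Cgr n k R m)
      (BE n k R m) := by
  match m with
  | 0 =>
    show (⊥ : Submodule R (Cgr n k R 0)) = _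
    rw [show BE n k R 0 = ⊥ from rfl, Submodule.map_bot]
  | (mm + 1) =>
    show LinearMap.range (schubDeltaGr n k R mm) = _
    rw [range_delta_eq]
    rfl

noncomputable def kerEquiv (n k : ℕ) (R : Type*) [CommRing R] (m : ℕ) :
    ↥(LinearMap.ker (Elin n k R m)) ≃ₗ[R] ↥(LinearMap.ker (schubDeltaGr n k R m)) :=
  ((Qequiv n k R m).submoduleMap (LinearMap.ker (Elin n k R m))).trans
    (LinearEquiv.ofEq _ _ (ker_delta_eq m).symm)

lemma kerEquiv_coe (m : ℕ) (x : ↥(LinearMap.ker (Elin n k R m))) :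
    (kerEquiv n k R m x : Cgr n k R m) = Qequiv n k R m x.1 := rfl

lemma map_comap_eq (m : ℕ) :
    Submodule.map (kerEquiv n k R m :
        ↥(LinearMap.ker (Elin n k R m)) →ₗ[R] ↥(LinearMap.ker (schubDeltaGr n k R m)))
      (Submodule.comap (LinearMap.ker (Elin n k R m)).subtype (BE n k R m))
    = Submodule.comap (LinearMap.ker (schubDeltaGr n k R m)).subtype (Bsub n k R m) := by
  ext y
  rw [Submodule.mem_map, Submodule.mem_comap]
  constructor
  · rintro ⟨x, hx, rfl⟩
    rw [Submodule.mem_comap] at hx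
    show (kerEquiv n k R m x : Cgr n k R m) ∈ Bsub n k R m
    rw [kerEquiv_coe, Bsub_eq]
    exact ⟨x.1, hx, rfl⟩
  · intro hy
    rw [Bsub_eq] at hy
    obtain ⟨b, hb, hQb⟩ := hy
    have hbker : b ∈ LinearMap.ker (Elin n k R m) := by
      have hy2 : (y : Cgr n k R m) ∈ Submodule.map
          (Qequiv n k R m : Cgr n k R m →ₗ[R] Cgr n k R m)
          (LinearMap.ker (Elin n k R m)) := by
        rw [← ker_delta_eq]
        exact y.2
      obtain ⟨c, hc, hQc⟩ := hy2
      have hbc : b = c := (Qequiv n k R m).injective (by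
        show Qequiv n k R m b = Qequiv n k R m c
        exact hQb.trans hQc.symm)
      rw [hbc]
      exact hc
    refine ⟨⟨b, hbker⟩, ?_, ?_⟩
    · rw [Submodule.mem_comap]
      exact hb
    · apply Subtype.ext
      exact hQb

noncomputable def hgrEquivHE (n k : ℕ) (R : Type*) [CommRing R] (m : ℕ) :
    Hgr n k R m ≃ₗ[R]
      (↥(LinearMap.ker (Elin n k R m)) ⧸
        Submodule.comap (LinearMap.ker (Elin n k R m)).subtype (BE n k R m)) :=
  (Submodule.Quotient.equiv _ _ (kerEquiv n k R m) (map_comap_eq m)).symm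

end Transport

/-- the cohomology of the Schubert cochain complex over `R` is isomorphic, as a
graded `R`-module, to `⊕_{S ∈ {n;k}} V_S` with `V_S` in degree `d(S)`, where `V_S = R` if
`In(S) = ∅ = Out(S)`, `V_S = ker(R →2→ R)` if `min(In(S) ∪ Out(S)) ∈ Out(S)`, and
`V_S = coker(R →2→ R)` if `min(In(S) ∪ Out(S)) ∈ In(S)`. -/
theorem stmt6 (n k : ℕ) (hk : k ≤ n) (R : Type*) [CommRing R] :
    ∀ m : ℕ, Nonempty (Hgr n k R m ≃ₗ[R]
      ((↥(freeIdxGr n k m) → R) ×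
       (↥(minOutIdxGr n k m) → ↥(LinearMap.ker (two R))) ×
       (↥(minInIdxGr n k m) → R ⧸ LinearMap.range (two R)))) := by
  intro m
  exact ⟨(hgrEquivHE n k R m).trans (heEquiv m)⟩
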